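/- arXiv:1906.11071 — 5 statements merged into one kernel-verified Lean document; each statement's English description precedes it below -/
import Mathlib

section
/- Suppose {α_i} and {μ_i} are such that Condition (*) holds (so that T_f is a bounded linear operator). If limsup_{i→∞} η_i = 1, then the composition operator T_f : L^p(μ) → L^p(μ) is topologically transitive. -/
open MeasureTheory Filter Set Topology ENNReal NNReal

noncomputable section

/-- The odometer (the "+1" map, with carry over to the right) on `Π i, Fin (α i)`. -/
def odometer (α : ℕ → ℕ) (x : ∀ i, Fin (α i)) : ∀ i, Fin (α i) :=
  fun i =>
    if ∀ j < i, ((x j : ℕ) + 1 = α j)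
    then ⟨((x i : ℕ) + 1) % α i, Nat.mod_lt _ (x i).pos⟩
    else x i

/-- Topological transitivity of a self-map of a topological space. -/
def TopTransitive {X : Type*} [TopologicalSpace X] (T : X → X) : Prop :=
  ∀ U V : Set X, IsOpen U → IsOpen V → U.Nonempty → V.Nonempty →
    ∃ k : ℕ, 1 ≤ k ∧ (T^[k] '' U ∩ V).Nonempty

/-- Topological mixing of a self-map of a topological space. -/
def TopMixing {X : Type*} [TopologicalSpace X] (T : X → X) : Prop :=
  ∀ U V : Set X, IsOpen U → IsOpen V → U.Nonempty → V.Nonempty →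
    ∃ k₀ : ℕ, 1 ≤ k₀ ∧ ∀ k ≥ k₀, (T^[k] '' U ∩ V).Nonempty

/-- `μ` is the product of the probability measures on the coordinates `Fin (α i)` given by
the weights `w i`: every basic cylinder has measure the product of the weights. -/
def IsProductMeasure (α : ℕ → ℕ) (w : ∀ i, Fin (α i) → NNReal)
    (μ : Measure (∀ i, Fin (α i))) : Prop :=
  ∀ (n : ℕ) (a : ∀ i : Fin n, Fin (α i.1)),
    μ {x | ∀ i : Fin n, x i.1 = a i} = ∏ i : Fin n, (w i.1 (a i) : ENNReal)

/-- Condition (*): there is `c > 0` with `μ B ≥ c • μ (g ⁻¹ B)` for all measurable `B`. -/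
def CondStar {X : Type*} [MeasurableSpace X] (μ : Measure X) (g : X → X) : Prop :=
  ∃ c : ℝ, 0 < c ∧ ∀ B : Set X, MeasurableSet B →
    ENNReal.ofReal c * μ (g ⁻¹' B) ≤ μ B

/-- Generalized odometer: "+1" at position `i` (with carry to the right). -/
def odoFrom (α : ℕ → ℕ) (i : ℕ) (x : ∀ j, Fin (α j)) : ∀ j, Fin (α j) :=
  fun j =>
    if (i ≤ j ∧ ∀ l < j, i ≤ l → ((x l : ℕ) + 1 = α l))
    then ⟨((x j : ℕ) + 1) % α j, Nat.mod_lt _ (x j).pos⟩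
    else x j

lemma odoFrom_of_lt {α : ℕ → ℕ} {i j : ℕ} {x : ∀ j, Fin (α j)} (h : j < i) :
    odoFrom α i x j = x j := by
  simp only [odoFrom]
  rw [if_neg]
  rintro ⟨h1, -⟩; omega

lemma odoFrom_self {α : ℕ → ℕ} {i : ℕ} {x : ∀ j, Fin (α j)} :
    odoFrom α i x i = ⟨((x i : ℕ) + 1) % α i, Nat.mod_lt _ (x i).pos⟩ := by
  simp only [odoFrom]
  rw [if_pos ⟨le_refl i, fun l hl hil => absurd hil (by omega)⟩]

lemma odoFrom_of_gt_nocarry {α : ℕ → ℕ} {i j : ℕ} {x : ∀ j, Fin (α j)} (hij : i < j)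
    (hx : (x i : ℕ) + 1 ≠ α i) : odoFrom α i x j = x j := by
  simp only [odoFrom]
  rw [if_neg]
  rintro ⟨-, h2⟩
  exact hx (h2 i hij le_rfl)

lemma odoFrom_of_gt_carry {α : ℕ → ℕ} {i j : ℕ} {x : ∀ j, Fin (α j)} (hij : i < j)
    (hx : (x i : ℕ) + 1 = α i) : odoFrom α i x j = odoFrom α (i + 1) x j := by
  simp only [odoFrom]
  refine if_congr ⟨?_, ?_⟩ rfl rfl
  · rintro ⟨h1, h2⟩
    exact ⟨hij, fun l hl hil => h2 l hl (by omega)⟩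
  · rintro ⟨h1, h2⟩
    refine ⟨by omega, fun l hl hil => ?_⟩
    rcases eq_or_lt_of_le hil with rfl | h'
    · exact hx
    · exact h2 l hl h'

lemma odoFrom_congr {α : ℕ → ℕ} {i : ℕ} {x y : ∀ j, Fin (α j)}
    (h : ∀ l, i ≤ l → x l = y l) {j : ℕ} (hj : i ≤ j) :
    odoFrom α i x j = odoFrom α i y j := by
  have hxy : x j = y j := h j hj
  have hcond : (i ≤ j ∧ ∀ l < j, i ≤ l → ((x l : ℕ) + 1 = α l)) ↔
      (i ≤ j ∧ ∀ l < j, i ≤ l → ((y l : ℕ) + 1 = α l)) := by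
    constructor <;> rintro ⟨h1, h2⟩ <;> refine ⟨h1, fun l hl hil => ?_⟩
    · rw [← h l hil]; exact h2 l hl hil
    · rw [h l hil]; exact h2 l hl hil
  have hbr : (⟨((x j : ℕ) + 1) % α j, Nat.mod_lt _ (x j).pos⟩ : Fin (α j)) =
      ⟨((y j : ℕ) + 1) % α j, Nat.mod_lt _ (y j).pos⟩ := by
    apply Fin.ext
    show ((x j : ℕ) + 1) % α j = ((y j : ℕ) + 1) % α j
    rw [hxy]
  simp only [odoFrom]
  rw [if_congr hcond hbr hxy]

lemma odoFrom_iter_lt {α : ℕ → ℕ} {i : ℕ} {x : ∀ j, Fin (α j)} (m : ℕ) {j : ℕ} (hj : j < i) :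
    ((odoFrom α i)^[m] x) j = x j := by
  induction m with
  | zero => rfl
  | succ m ih => rw [Function.iterate_succ_apply', odoFrom_of_lt hj, ih]

lemma odoFrom_iter_self {α : ℕ → ℕ} {i : ℕ} {x : ∀ j, Fin (α j)} (m : ℕ) :
    (((odoFrom α i)^[m] x) i : ℕ) = ((x i : ℕ) + m) % α i := by
  induction m with
  | zero => simp [Nat.mod_eq_of_lt (x i).isLt]
  | succ m ih =>
    rw [Function.iterate_succ_apply', odoFrom_self]
    show ((((odoFrom α i)^[m] x) i : ℕ) + 1) % α i = _
    rw [ih, Nat.mod_add_mod, Nat.add_assoc]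

lemma odoFrom_iter_gt {α : ℕ → ℕ} {i : ℕ} {x : ∀ j, Fin (α j)} {m : ℕ} (hm : m ≤ α i) :
    ∀ j, i < j → ((odoFrom α i)^[m] x) j =
      if α i ≤ (x i : ℕ) + m then odoFrom α (i + 1) x j else x j := by
  induction m with
  | zero =>
    intro j hj
    rw [if_neg (by have := (x i).isLt; omega)]
    rfl
  | succ m ih =>
    intro j hj
    have hm' : m ≤ α i := by omega
    have hyi : (((odoFrom α i)^[m] x) i : ℕ) = ((x i : ℕ) + m) % α i := odoFrom_iter_self m
    rw [Function.iterate_succ_apply']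
    by_cases h1 : α i ≤ (x i : ℕ) + m
    · have h2 : α i ≤ (x i : ℕ) + (m + 1) := by omega
      have hlt2 : (x i : ℕ) + m - α i + 1 < α i := by have := (x i).isLt; omega
      have hyival : ((((odoFrom α i)^[m] x) i : ℕ)) = (x i : ℕ) + m - α i := by
        rw [hyi, Nat.mod_eq_sub_mod h1, Nat.mod_eq_of_lt (by have := (x i).isLt; omega)]
      have hnc : ((((odoFrom α i)^[m] x) i : ℕ)) + 1 ≠ α i := by omega
      rw [odoFrom_of_gt_nocarry hj hnc, ih hm' j hj, if_pos h1, if_pos h2]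
    · by_cases h2 : α i ≤ (x i : ℕ) + (m + 1)
      · have hyival : ((((odoFrom α i)^[m] x) i : ℕ)) = (x i : ℕ) + m := by
          rw [hyi, Nat.mod_eq_of_lt (by omega)]
        have hcar : ((((odoFrom α i)^[m] x) i : ℕ)) + 1 = α i := by omega
        rw [odoFrom_of_gt_carry hj hcar, if_pos h2]
        exact odoFrom_congr (fun l hl => by rw [ih hm' l (by omega), if_neg h1]) (by omega)
      · have hyival : ((((odoFrom α i)^[m] x) i : ℕ)) = (x i : ℕ) + m := by
          rw [hyi, Nat.mod_eq_of_lt (by omega)]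
        have hnc : ((((odoFrom α i)^[m] x) i : ℕ)) + 1 ≠ α i := by omega
        rw [odoFrom_of_gt_nocarry hj hnc, ih hm' j hj, if_neg h1, if_neg h2]

lemma odoFrom_iterate_succ {α : ℕ → ℕ} (i : ℕ) (x : ∀ j, Fin (α j)) :
    (odoFrom α i)^[α i] x = odoFrom α (i + 1) x := by
  funext j
  rcases lt_trichotomy j i with hj | rfl | hj
  · rw [odoFrom_iter_lt _ hj, odoFrom_of_lt (by omega)]
  · apply Fin.ext
    rw [odoFrom_iter_self, odoFrom_of_lt (by omega), Nat.add_mod_right,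
      Nat.mod_eq_of_lt (x j).isLt]
  · rw [odoFrom_iter_gt le_rfl j hj, if_pos (by omega)]

lemma odometer_iterate (α : ℕ → ℕ) (i : ℕ) :
    (odometer α)^[∏ j ∈ Finset.range i, α j] = odoFrom α i := by
  induction i with
  | zero =>
    simp only [Finset.range_zero, Finset.prod_empty, Function.iterate_one]
    funext x j
    simp only [odometer, odoFrom]
    refine if_congr ⟨fun h => ⟨Nat.zero_le _, fun l hl _ => h l hl⟩,
      fun h l hl => h.2 l hl (Nat.zero_le _)⟩ rfl rfl
  | succ i ih =>
    rw [Finset.prod_range_succ, Function.iterate_mul, ih]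
    funext x
    exact odoFrom_iterate_succ i x

lemma succ_mod_inj {n a b : ℕ} (ha : a < n) (hb : b < n) (h : (a + 1) % n = (b + 1) % n) :
    a = b := by
  by_cases h1 : a + 1 = n <;> by_cases h2 : b + 1 = n
  · omega
  · rw [h1, Nat.mod_self, Nat.mod_eq_of_lt (by omega)] at h; omega
  · rw [h2, Nat.mod_self, Nat.mod_eq_of_lt (by omega)] at h; omega
  · rw [Nat.mod_eq_of_lt (by omega), Nat.mod_eq_of_lt (by omega)] at h; omega

section Meas

variable {α : ℕ → ℕ} {w : ∀ i, Fin (α i) → NNReal} {μ : Measure (∀ i, Fin (α i))}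

lemma cylinderSet_measurable (n : ℕ) (a : ∀ i : Fin n, Fin (α i.1)) :
    MeasurableSet {x : ∀ i, Fin (α i) | ∀ i : Fin n, x i.1 = a i} := by
  have h : {x : ∀ i, Fin (α i) | ∀ i : Fin n, x i.1 = a i} =
      ⋂ i : Fin n, (fun x : ∀ i, Fin (α i) => x i.1) ⁻¹' {a i} := by
    ext x; simp [Set.mem_iInter]
  rw [h]
  exact MeasurableSet.iInter fun i => (measurable_pi_apply _) (measurableSet_singleton _)

lemma prob_of_prod (hμ : IsProductMeasure α w μ) : IsProbabilityMeasure μ := by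
  constructor
  have h := hμ 0 (fun j => j.elim0)
  have hset : {x : ∀ i, Fin (α i) | ∀ j : Fin 0, x j.1 = j.elim0} = Set.univ :=
    Set.eq_univ_of_forall (fun x j => j.elim0)
  rw [hset] at h
  simpa using h

lemma measure_single (hμ : IsProductMeasure α w μ) (hw_sum : ∀ i, ∑ j, w i j = 1)
    (i : ℕ) (b : Fin (α i)) :
    μ {x : ∀ j, Fin (α j) | x i = b} = (w i b : ENNReal) := by
  classical
  set A : (∀ j : Fin i, Fin (α j.1)) → ∀ j : Fin (i + 1), Fin (α j.1) :=
    fun a => Fin.lastCases b a with hA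
  have hsets : {x : ∀ j, Fin (α j) | x i = b} =
      ⋃ a : ∀ j : Fin i, Fin (α j.1), {x | ∀ j : Fin (i + 1), x j.1 = A a j} := by
    ext x
    simp only [Set.mem_setOf_eq, Set.mem_iUnion]
    constructor
    · intro hx
      refine ⟨fun j => x j.1, fun j => ?_⟩
      induction j using Fin.lastCases with
      | last => simpa [hA] using hx
      | cast j => simp [hA]
    · rintro ⟨a, ha⟩
      have h := ha (Fin.last i)
      simpa [hA] using h
  have hdisj : Pairwise (Function.onFun Disjoint
      fun a => {x : ∀ j, Fin (α j) | ∀ j : Fin (i + 1), x j.1 = A a j}) := by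
    intro a a' haa'
    rw [Function.onFun, Set.disjoint_left]
    rintro x hx hx'
    apply haa'
    funext j
    have h1 := hx (Fin.castSucc j)
    have h2 := hx' (Fin.castSucc j)
    simp only [hA, Fin.lastCases_castSucc] at h1 h2
    exact h1.symm.trans h2
  rw [hsets, measure_iUnion hdisj (fun a => cylinderSet_measurable (i + 1) (A a)), tsum_fintype]
  have hval : ∀ a, μ {x : ∀ j, Fin (α j) | ∀ j : Fin (i + 1), x j.1 = A a j} =
      (∏ j : Fin i, (w j.1 (a j) : ENNReal)) * (w i b : ENNReal) := by
    intro a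
    rw [hμ (i + 1) (A a), Fin.prod_univ_castSucc]
    congr 1
    · exact Finset.prod_congr rfl fun j _ => by simp [hA]
    · simp [hA]
  calc (∑ a : ∀ j : Fin i, Fin (α j.1), μ {x : ∀ j, Fin (α j) | ∀ j : Fin (i + 1), x j.1 = A a j})
      = ∑ a : ∀ j : Fin i, Fin (α j.1), (∏ j : Fin i, (w j.1 (a j) : ENNReal)) * (w i b : ENNReal) :=
        Finset.sum_congr rfl fun a _ => hval a
    _ = (∑ a : ∀ j : Fin i, Fin (α j.1), ∏ j : Fin i, (w j.1 (a j) : ENNReal)) * (w i b : ENNReal) := by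
        rw [Finset.sum_mul]
    _ = (∏ j : Fin i, ∑ c : Fin (α j.1), (w j.1 c : ENNReal)) * (w i b : ENNReal) := by
        rw [Finset.prod_univ_sum, Fintype.piFinset_univ]
    _ = (w i b : ENNReal) := by
        have h1 : ∀ j : Fin i, (∑ c : Fin (α j.1), (w j.1 c : ENNReal)) = 1 := fun j => by
          rw [← ENNReal.coe_finset_sum, hw_sum j.1, ENNReal.coe_one]
        rw [Finset.prod_congr rfl fun j _ => h1 j, Finset.prod_const_one, one_mul]

lemma comp_ae (hstar : CondStar μ (odometer α)) {v u : (∀ i, Fin (α i)) → ℝ}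
    (h : v =ᵐ[μ] u) : (v ∘ odometer α) =ᵐ[μ] (u ∘ odometer α) := by
  obtain ⟨c, hc, hcs⟩ := hstar
  have hZ : μ {x | v x ≠ u x} = 0 := by
    rw [Filter.EventuallyEq, ae_iff] at h
    exact h
  obtain ⟨Z', hsub, hm, h0⟩ := exists_measurable_superset_of_null hZ
  have hpre : μ (odometer α ⁻¹' Z') = 0 := by
    have h1 := hcs Z' hm
    rw [h0] at h1
    have h2 : ENNReal.ofReal c * μ (odometer α ⁻¹' Z') = 0 := le_antisymm h1 zero_le
    rcases mul_eq_zero.mp h2 with h3 | h3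
    · exact absurd h3 (by simp only [ENNReal.ofReal_eq_zero, not_le]; linarith)
    · exact h3
  rw [Filter.EventuallyEq, ae_iff]
  refine measure_mono_null (fun x hx => ?_) hpre
  exact hsub hx

lemma comp_iter_ae (hstar : CondStar μ (odometer α)) (k : ℕ) {v u : (∀ i, Fin (α i)) → ℝ}
    (h : v =ᵐ[μ] u) : v ∘ (odometer α)^[k] =ᵐ[μ] u ∘ (odometer α)^[k] := by
  induction k with
  | zero => simpa using h
  | succ k ih =>
    rw [Function.iterate_succ]
    calc v ∘ ((odometer α)^[k] ∘ odometer α) = (v ∘ (odometer α)^[k]) ∘ odometer α := rfl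
      _ =ᵐ[μ] (u ∘ (odometer α)^[k]) ∘ odometer α := comp_ae ⟨_, hstar.choose_spec.1, hstar.choose_spec.2⟩ ih
      _ = u ∘ ((odometer α)^[k] ∘ odometer α) := rfl

end Meas

section Dens

variable (α : ℕ → ℕ) (μ : Measure (∀ i, Fin (α i))) (p : ENNReal)

/-- The additive subgroup of `Lp` consisting of (a.e. equivalence classes of) functions
depending only on finitely many coordinates. -/
def cylGroup [Fact (1 ≤ p)] : AddSubgroup (Lp ℝ p μ) where
  carrier := {F | ∃ n, ∃ g : (∀ i, Fin (α i)) → ℝ, Measurable g ∧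
    (∀ x y, (∀ j, j < n → x j = y j) → g x = g y) ∧ ⇑F =ᵐ[μ] g}
  zero_mem' := ⟨0, fun _ => 0, measurable_const, fun _ _ _ => rfl, Lp.coeFn_zero _ _ _⟩
  add_mem' := by
    rintro F G ⟨n₁, g₁, hm₁, hc₁, hae₁⟩ ⟨n₂, g₂, hm₂, hc₂, hae₂⟩
    refine ⟨max n₁ n₂, g₁ + g₂, hm₁.add hm₂, fun x y h => ?_, ?_⟩
    · simp only [Pi.add_apply]
      rw [hc₁ x y fun j hj => h j (lt_of_lt_of_le hj (le_max_left _ _)),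
        hc₂ x y fun j hj => h j (lt_of_lt_of_le hj (le_max_right _ _))]
    · filter_upwards [Lp.coeFn_add F G, hae₁, hae₂] with x h1 h2 h3
      simp only [h1, Pi.add_apply, h2, h3]
  neg_mem' := by
    rintro F ⟨n, g, hm, hc, hae⟩
    refine ⟨n, -g, hm.neg, fun x y h => by simp only [Pi.neg_apply, hc x y h], ?_⟩
    filter_upwards [Lp.coeFn_neg F, hae] with x h1 h2
    simp only [h1, Pi.neg_apply, h2]

lemma cylGroup_dense [IsProbabilityMeasure μ] [Fact (1 ≤ p)] (hp' : p ≠ ⊤) :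
    Dense (cylGroup α μ p : Set (Lp ℝ p μ)) := by
  haveI : Fact (p ≠ ∞) := ⟨hp'⟩
  refine fun F => ?_
  induction F using Lp.induction hp' with
  | @indicatorConst c s hs hμs =>
    have halg : IsSetAlgebra (measurableCylinders (fun i => Fin (α i))) :=
      ⟨empty_mem_measurableCylinders _, fun s hs => compl_mem_measurableCylinders hs,
        fun s t hs ht => union_mem_measurableCylinders hs ht⟩
    have hdense : μ.MeasureDense (measurableCylinders (fun i => Fin (α i))) :=
      Measure.MeasureDense.of_generateFrom_isSetAlgebra_finite μ halg
        generateFrom_measurableCylinders.symm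
    have hmem := hdense.indicatorConstLp_subset_closure p c ⟨s, hs, hμs.ne, rfl⟩
    refine closure_mono ?_ hmem
    rintro - ⟨t, ht, hμt, rfl⟩
    obtain ⟨I, S, hS, rfl⟩ := (mem_measurableCylinders t).mp ht
    refine ⟨(I.sup id) + 1, (cylinder I S).indicator fun _ => c,
      measurable_const.indicator (MeasurableSet.of_mem_measurableCylinders ht), fun x y h => ?_,
      indicatorConstLp_coeFn⟩
    have hxy : x ∈ cylinder I S ↔ y ∈ cylinder I S := by
      rw [mem_cylinder, mem_cylinder]
      have he : I.restrict x = I.restrict y :=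
        funext fun i => h i (Nat.lt_succ_of_le (Finset.le_sup (f := id) i.2))
      rw [he]
    by_cases hx : x ∈ cylinder I S
    · rw [Set.indicator_of_mem hx, Set.indicator_of_mem (hxy.mp hx)]
    · rw [Set.indicator_of_notMem hx, Set.indicator_of_notMem (fun hy => hx (hxy.mpr hy))]
  | @add f g hf hg hdisj hPf hPg =>
    exact (cylGroup α μ p).topologicalClosure.add_mem hPf hPg
  | isClosed => exact isClosed_closure

end Dens

section Bound

variable {α : ℕ → ℕ} {μ : Measure (∀ i, Fin (α i))} {p : ENNReal}

lemma norm_indicator_bound [IsProbabilityMeasure μ] [Fact (1 ≤ p)] (hp' : p ≠ ⊤)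
    {s : Set (∀ i, Fin (α i))} (hs : MeasurableSet s)
    {h : (∀ i, Fin (α i)) → ℝ} {M : ℝ} (hM : 0 ≤ M) (hb : ∀ x, |h x| ≤ M) :
    (eLpNorm (s.indicator h) p μ).toReal ≤ M * ((μ s).toReal) ^ (1 / p.toReal) := by
  have hp0 : p ≠ 0 := (lt_of_lt_of_le zero_lt_one Fact.out).ne'
  have h1 : eLpNorm (s.indicator h) p μ ≤ eLpNorm (s.indicator (fun _ => M)) p μ := by
    apply eLpNorm_mono
    intro x
    by_cases hx : x ∈ s
    · rw [Set.indicator_of_mem hx, Set.indicator_of_mem hx, Real.norm_eq_abs, Real.norm_eq_abs,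
        abs_of_nonneg hM]
      exact hb x
    · rw [Set.indicator_of_notMem hx, Set.indicator_of_notMem hx]
  rw [eLpNorm_indicator_const hs hp0 hp'] at h1
  have hfin : ((‖M‖₊ : ENNReal) * μ s ^ (1 / p.toReal)) ≠ ⊤ :=
    ENNReal.mul_ne_top ENNReal.coe_ne_top
      (ENNReal.rpow_ne_top_of_nonneg (by positivity) (measure_ne_top μ s))
  calc (eLpNorm (s.indicator h) p μ).toReal
      ≤ ((‖M‖₊ : ENNReal) * μ s ^ (1 / p.toReal)).toReal := ENNReal.toReal_mono hfin h1
    _ = M * ((μ s).toReal) ^ (1 / p.toReal) := by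
        rw [ENNReal.toReal_mul, ENNReal.toReal_rpow]
        congr 1
        simp [Real.norm_eq_abs, abs_of_nonneg hM]

lemma cyl_bound (α : ℕ → ℕ) (hα : ∀ i, 2 ≤ α i) (n : ℕ) (g : (∀ i, Fin (α i)) → ℝ)
    (hgc : ∀ x y, (∀ j, j < n → x j = y j) → g x = g y) :
    ∃ M : ℝ, 0 ≤ M ∧ ∀ x, |g x| ≤ M := by
  classical
  have hpos : ∀ j, 0 < α j := fun j => by have := hα j; omega
  set e : (∀ j : Fin n, Fin (α j.1)) → ∀ j, Fin (α j) :=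
    fun a j => if h : j < n then a ⟨j, h⟩ else ⟨0, hpos j⟩ with he
  haveI : Nonempty (∀ j : Fin n, Fin (α j.1)) := ⟨fun j => ⟨0, hpos j.1⟩⟩
  obtain ⟨a₀, ha₀⟩ := Finite.exists_max fun a => |g (e a)|
  refine ⟨|g (e a₀)|, abs_nonneg _, fun x => ?_⟩
  have hx : g x = g (e fun j => x j.1) := by
    apply hgc
    intro j hj
    simp only [he, dif_pos hj]
  rw [hx]
  exact ha₀ (fun j => x j.1)

end Bound

section Titer

variable {α : ℕ → ℕ} {μ : Measure (∀ i, Fin (α i))} {p : ENNReal} [Fact (1 ≤ p)]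

lemma T_iter_ae (hstar : CondStar μ (odometer α)) (T : Lp ℝ p μ →L[ℝ] Lp ℝ p μ)
    (hT : ∀ φ : Lp ℝ p μ, ⇑(T φ) =ᵐ[μ] (⇑φ ∘ odometer α)) (k : ℕ) (u : Lp ℝ p μ) :
    ⇑((⇑T)^[k] u) =ᵐ[μ] ⇑u ∘ (odometer α)^[k] := by
  induction k with
  | zero => simp
  | succ k ih =>
    rw [Function.iterate_succ_apply']
    calc ⇑(T ((⇑T)^[k] u)) =ᵐ[μ] ⇑((⇑T)^[k] u) ∘ odometer α := hT _
      _ =ᵐ[μ] (⇑u ∘ (odometer α)^[k]) ∘ odometer α := comp_ae hstar ih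
      _ = ⇑u ∘ (odometer α)^[k + 1] := by rw [Function.iterate_succ]; rfl

end Titer

/-- Transitivity sufficient condition: if `limsup_i η_i = 1`, then the composition
operator `T_f` on `L^p(μ)` is topologically transitive. -/
theorem transitive_of_limsup_eta_eq_one
    (α : ℕ → ℕ) (hα : ∀ i, 2 ≤ α i)
    (w : ∀ i, Fin (α i) → NNReal)
    (hw_pos : ∀ i j, 0 < w i j) (hw_sum : ∀ i, ∑ j, w i j = 1)
    (μ : Measure (∀ i, Fin (α i))) (hμ : IsProductMeasure α w μ)
    (hstar : CondStar μ (odometer α))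
    (p : ENNReal) [Fact (1 ≤ p)] (hp' : p ≠ ⊤)
    (T : Lp ℝ p μ →L[ℝ] Lp ℝ p μ)
    (hT : ∀ φ : Lp ℝ p μ, ⇑(T φ) =ᵐ[μ] (⇑φ ∘ odometer α))
    (heta : Filter.limsup (fun i => ((⨆ j, w i j : NNReal) : ℝ)) atTop = 1) :
    TopTransitive ⇑T := by
  classical
  haveI hprob : IsProbabilityMeasure μ := prob_of_prod hμ
  intro U V hU hV hUne hVne
  obtain ⟨φ₀, hφ₀⟩ := hUne
  obtain ⟨ψ₀, hψ₀⟩ := hVne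
  obtain ⟨ε₁, hε₁, hball₁⟩ := Metric.isOpen_iff.mp hU φ₀ hφ₀
  obtain ⟨ε₂, hε₂, hball₂⟩ := Metric.isOpen_iff.mp hV ψ₀ hψ₀
  set ε := min ε₁ ε₂ with hεdef
  have hεpos : 0 < ε := lt_min hε₁ hε₂
  have hdense := cylGroup_dense α μ p hp'
  obtain ⟨φ, hφmem, hφd⟩ := Metric.mem_closure_iff.mp (hdense φ₀) (ε / 2) (by positivity)
  obtain ⟨ψ, hψmem, hψd⟩ := Metric.mem_closure_iff.mp (hdense ψ₀) (ε / 2) (by positivity)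
  obtain ⟨n₁, F, hFm, hFc, hφF⟩ := hφmem
  obtain ⟨n₂, G, hGm, hGc, hψG⟩ := hψmem
  set n := max n₁ n₂ with hn
  set g : (∀ i, Fin (α i)) → ℝ := fun x => G x - F x with hg
  have hgm : Measurable g := hGm.sub hFm
  have hgc : ∀ x y, (∀ j, j < n → x j = y j) → g x = g y := by
    intro x y h
    simp only [hg]
    rw [hGc x y (fun j hj => h j (lt_of_lt_of_le hj (le_max_right _ _))),
      hFc x y (fun j hj => h j (lt_of_lt_of_le hj (le_max_left _ _)))]
  obtain ⟨M, hM0, hMb⟩ := cyl_bound α hα n g hgc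
  have hpr : 0 < p.toReal :=
    ENNReal.toReal_pos ((lt_of_lt_of_le zero_lt_one Fact.out).ne') hp'
  set δ : ℝ := (ε / 2 / (M + 1)) ^ p.toReal with hδ
  have hδpos : 0 < δ := Real.rpow_pos_of_pos (by positivity) _
  -- the key numerical estimate
  have hδpow : δ ^ (1 / p.toReal) = ε / 2 / (M + 1) := by
    rw [hδ, ← Real.rpow_mul (by positivity), mul_one_div, div_self hpr.ne', Real.rpow_one]
  have hkey : M * δ ^ (1 / p.toReal) < ε / 2 := by
    rw [hδpow]
    have h2 : (M + 1) * (ε / 2 / (M + 1)) = ε / 2 := by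
      rw [mul_comm]
      exact div_mul_cancel₀ _ (by positivity)
    have h3 : M * (ε / 2 / (M + 1)) < (M + 1) * (ε / 2 / (M + 1)) :=
      mul_lt_mul_of_pos_right (by linarith) (by positivity)
    linarith
  -- choose a coordinate with concentrated weight
  have hcob : Filter.IsCoboundedUnder (· ≤ ·) atTop
      (fun i => ((⨆ j, w i j : NNReal) : ℝ)) :=
    (Filter.isBoundedUnder_of ⟨0, fun i => NNReal.coe_nonneg _⟩ :
      Filter.IsBoundedUnder (· ≥ ·) atTop _).isCobounded_le
  have hfreq : ∃ᶠ i in atTop, 1 - δ < ((⨆ j, w i j : NNReal) : ℝ) :=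
    frequently_lt_of_lt_limsup hcob (by rw [heta]; linarith)
  obtain ⟨i, hin, hηi⟩ := Filter.frequently_atTop.mp hfreq n
  haveI : Nonempty (Fin (α i)) := ⟨⟨0, by have := hα i; omega⟩⟩
  obtain ⟨b, hbmax⟩ := Finite.exists_max (w i)
  have hwb : 1 - δ < (w i b : ℝ) :=
    lt_of_lt_of_le hηi (NNReal.coe_le_coe.mpr (ciSup_le hbmax))
  have hsum : ∑ j, (w i j : ℝ) = 1 := by
    have h := congrArg NNReal.toReal (hw_sum i)
    push_cast at h
    exact h
  set bb : Fin (α i) := ⟨((b : ℕ) + 1) % α i, Nat.mod_lt _ b.pos⟩ with hbbdef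
  have hne : bb ≠ b := by
    intro hcon
    have hv : ((b : ℕ) + 1) % α i = (b : ℕ) := congrArg Fin.val hcon
    have h2 := hα i
    have hblt := b.isLt
    rcases Nat.lt_or_ge ((b : ℕ) + 1) (α i) with hlt | hge
    · rw [Nat.mod_eq_of_lt hlt] at hv; omega
    · have heq : (b : ℕ) + 1 = α i := by omega
      rw [heq, Nat.mod_self] at hv
      omega
  have hwbb : (w i bb : ℝ) < δ := by
    have h1 : ∑ j ∈ ({bb, b} : Finset (Fin (α i))), (w i j : ℝ) ≤ ∑ j, (w i j : ℝ) :=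
      Finset.sum_le_sum_of_subset_of_nonneg (Finset.subset_univ _)
        (fun j _ _ => NNReal.coe_nonneg _)
    rw [Finset.sum_pair hne, hsum] at h1
    linarith
  have hwb1 : (w i b : ℝ) ≤ 1 := by
    have h1 := Finset.single_le_sum (f := fun j => (w i j : ℝ))
      (fun j _ => NNReal.coe_nonneg _) (Finset.mem_univ b)
    rw [hsum] at h1
    exact h1
  -- the relevant sets
  set Ds : Set (∀ j, Fin (α j)) := {x | x i = b} with hDsdef
  set Es : Set (∀ j, Fin (α j)) := {x | x i = bb} with hEsdef
  have hDm : MeasurableSet Ds := by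
    have hset : Ds = (fun x : ∀ j, Fin (α j) => x i) ⁻¹' {b} := by
      ext x; simp [hDsdef]
    rw [hset]
    exact (measurable_pi_apply i) (measurableSet_singleton b)
  have hEm : MeasurableSet Es := by
    have hset : Es = (fun x : ∀ j, Fin (α j) => x i) ⁻¹' {bb} := by
      ext x; simp [hEsdef]
    rw [hset]
    exact (measurable_pi_apply i) (measurableSet_singleton bb)
  have hμD : μ Ds = (w i b : ENNReal) := measure_single hμ hw_sum i b
  have hμE : μ Es = (w i bb : ENNReal) := measure_single hμ hw_sum i bb
  have hEtoReal : (μ Es).toReal ≤ δ := by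
    rw [hμE, ENNReal.coe_toReal]
    exact hwbb.le
  have hDctoReal : (μ Dsᶜ).toReal ≤ δ := by
    have hnn : w i b ≤ 1 := by exact_mod_cast hwb1
    rw [measure_compl hDm (measure_ne_top _ _), measure_univ, hμD,
      ENNReal.toReal_sub_of_le (by exact_mod_cast hnn) ENNReal.one_ne_top]
    simp only [ENNReal.toReal_one, ENNReal.coe_toReal]
    linarith
  -- the iterate
  set k := ∏ j ∈ Finset.range i, α j with hkdef
  have hk1 : 1 ≤ k :=
    Nat.one_le_iff_ne_zero.mpr (Finset.prod_ne_zero_iff.mpr fun j _ => by have := hα j; omega)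
  have hiter : (odometer α)^[k] = odoFrom α i := odometer_iterate α i
  have hfix : ∀ (x : ∀ j, Fin (α j)) j, j < i → ((odometer α)^[k] x) j = x j := by
    intro x j hj
    rw [hiter]
    exact odoFrom_of_lt hj
  have hpre : (odometer α)^[k] ⁻¹' Es = Ds := by
    ext x
    simp only [Set.mem_preimage, hEsdef, hDsdef, Set.mem_setOf_eq, hiter]
    constructor
    · intro hx
      have hv : ((odoFrom α i x) i : ℕ) = ((x i : ℕ) + 1) % α i := by rw [odoFrom_self]
      have hv2 : ((x i : ℕ) + 1) % α i = ((b : ℕ) + 1) % α i := by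
        rw [← hv, hx]
      exact Fin.ext (succ_mod_inj (x i).isLt b.isLt hv2)
    · intro hx
      apply Fin.ext
      rw [odoFrom_self]
      show ((x i : ℕ) + 1) % α i = ((b : ℕ) + 1) % α i
      rw [hx]
  -- the perturbation
  set χf : (∀ j, Fin (α j)) → ℝ := Es.indicator g with hχfdef
  have hχmem : MemLp χf p μ := by
    refine MemLp.of_bound (hgm.indicator hEm).aestronglyMeasurable M
      (Filter.Eventually.of_forall fun x => ?_)
    rw [Real.norm_eq_abs]
    by_cases hx : x ∈ Es
    · rw [hχfdef]
      simp only [Set.indicator_of_mem hx]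
      exact hMb x
    · rw [hχfdef]
      simp only [Set.indicator_of_notMem hx, abs_zero]
      exact hM0
  set χ : Lp ℝ p μ := hχmem.toLp χf with hχdef
  set u : Lp ℝ p μ := φ + χ with hudef
  have hχnorm : ‖χ‖ < ε / 2 := by
    rw [hχdef, Lp.norm_toLp]
    calc (eLpNorm χf p μ).toReal ≤ M * ((μ Es).toReal) ^ (1 / p.toReal) :=
          norm_indicator_bound hp' hEm hM0 hMb
      _ ≤ M * δ ^ (1 / p.toReal) := by
          refine mul_le_mul_of_nonneg_left ?_ hM0
          exact Real.rpow_le_rpow ENNReal.toReal_nonneg hEtoReal (by positivity)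
      _ < ε / 2 := hkey
  have huU : u ∈ U := by
    apply hball₁
    have hd1 : dist u φ = ‖χ‖ := by
      rw [dist_eq_norm, hudef, add_sub_cancel_left]
    have := dist_triangle u φ φ₀
    rw [Metric.mem_ball]
    have hd2 : dist φ φ₀ < ε / 2 := by rw [dist_comm]; exact hφd
    calc dist u φ₀ ≤ dist u φ + dist φ φ₀ := dist_triangle u φ φ₀
      _ < ε / 2 + ε / 2 := by rw [hd1]; exact add_lt_add hχnorm hd2
      _ = ε := by ring
      _ ≤ ε₁ := min_le_left _ _
  -- the image point
  set v : Lp ℝ p μ := (⇑T)^[k] u with hvdef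
  have hvae : ⇑v =ᵐ[μ] ⇑u ∘ (odometer α)^[k] := T_iter_ae hstar T hT k u
  have huae : ⇑u =ᵐ[μ] fun x => F x + χf x := by
    filter_upwards [Lp.coeFn_add φ χ, hφF, hχmem.coeFn_toLp] with x h1 h2 h3
    show (⇑(φ + χ)) x = F x + χf x
    rw [h1, Pi.add_apply, h2]
    congr 1
  have hvrep : ⇑v =ᵐ[μ] fun x => F x + Ds.indicator g x := by
    refine hvae.trans ?_
    refine (comp_iter_ae hstar k huae).trans (Filter.EventuallyEq.of_eq (funext fun x => ?_))
    have hF : F ((odometer α)^[k] x) = F x :=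
      hFc _ x fun j hj => hfix x j (lt_of_lt_of_le hj (le_trans (le_max_left _ _) hin))
    have hgk : g ((odometer α)^[k] x) = g x :=
      hgc _ x fun j hj => hfix x j (lt_of_lt_of_le hj hin)
    simp only [Function.comp_apply]
    rw [hF]
    congr 1
    by_cases hx : x ∈ Ds
    · have hx' : (odometer α)^[k] x ∈ Es := by
        rw [← hpre] at hx
        exact hx
      rw [hχfdef, Set.indicator_of_mem hx', Set.indicator_of_mem hx, hgk]
    · have hx' : (odometer α)^[k] x ∉ Es := fun hcon => hx (by rw [← hpre]; exact hcon)
      rw [hχfdef, Set.indicator_of_notMem hx', Set.indicator_of_notMem hx]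
  have hdiff : ⇑(v - ψ) =ᵐ[μ] Dsᶜ.indicator (fun x => F x - G x) := by
    filter_upwards [Lp.coeFn_sub v ψ, hvrep, hψG] with x h1 h2 h3
    rw [h1, Pi.sub_apply, h2, h3]
    by_cases hx : x ∈ Ds
    · rw [Set.indicator_of_mem hx, Set.indicator_of_notMem (by simp [hx] : x ∉ Dsᶜ)]
      simp only [hg]
      ring
    · rw [Set.indicator_of_notMem hx, Set.indicator_of_mem (Set.mem_compl hx)]
      ring
  have hvnorm : ‖v - ψ‖ < ε / 2 := by
    rw [Lp.norm_def, eLpNorm_congr_ae hdiff]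
    calc (eLpNorm (Dsᶜ.indicator fun x => F x - G x) p μ).toReal
        ≤ M * ((μ Dsᶜ).toReal) ^ (1 / p.toReal) :=
          norm_indicator_bound hp' hDm.compl hM0
            (fun x => by rw [abs_sub_comm]; exact hMb x)
      _ ≤ M * δ ^ (1 / p.toReal) := by
          refine mul_le_mul_of_nonneg_left ?_ hM0
          exact Real.rpow_le_rpow ENNReal.toReal_nonneg hDctoReal (by positivity)
      _ < ε / 2 := hkey
  have hvV : v ∈ V := by
    apply hball₂
    rw [Metric.mem_ball]
    have hd2 : dist ψ ψ₀ < ε / 2 := by rw [dist_comm]; exact hψd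
    calc dist v ψ₀ ≤ dist v ψ + dist ψ ψ₀ := dist_triangle v ψ ψ₀
      _ < ε / 2 + ε / 2 := by rw [dist_eq_norm]; exact add_lt_add hvnorm hd2
      _ = ε := by ring
      _ ≤ ε₂ := min_le_right _ _
  exact ⟨k, hk1, ⟨v, ⟨u, huU, rfl⟩, hvV⟩⟩
end
end

section
/- Suppose {α_i} and {μ_i} are such that Condition (*) holds (so that T_f is a bounded linear operator). If the composition operator T_f : L^p(μ) → L^p(μ) is topologically transitive, then limsup_{n→∞} ρ_n = ∞, i.e., the sequence {ρ_n} is unbounded. -/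
open MeasureTheory Filter Set Topology ENNReal NNReal

noncomputable section

namespace RhoAux

def decode (α : ℕ → ℕ) (x : ∀ i, Fin (α i)) : ∀ i, Fin (α i) :=
  fun i =>
    if ∀ j < i, ((x j : ℕ) = 0)
    then ⟨((x i : ℕ) + (α i - 1)) % α i, Nat.mod_lt _ (x i).pos⟩
    else x i

def prefixFun (α : ℕ → ℕ) (n : ℕ) (x : ∀ i, Fin (α i)) : ∀ i : Fin n, Fin (α i.1) :=
  fun i => x i.1

variable {α : ℕ → ℕ}

lemma odometer_congr {x y : ∀ i, Fin (α i)} {i : ℕ} (h : ∀ j ≤ i, x j = y j) :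
    odometer α x i = odometer α y i := by
  have hx : x i = y i := h i le_rfl
  have hc : (∀ j < i, ((x j : ℕ) + 1 = α j)) ↔ (∀ j < i, ((y j : ℕ) + 1 = α j)) := by
    constructor <;> intro hh j hj
    · rw [← h j hj.le]; exact hh j hj
    · rw [h j hj.le]; exact hh j hj
  unfold odometer
  by_cases hcase : ∀ j < i, ((x j : ℕ) + 1 = α j)
  · rw [if_pos hcase, if_pos (hc.mp hcase)]
    exact Fin.ext (by simp only [Fin.val_mk, congrArg Fin.val hx])
  · rw [if_neg hcase, if_neg (fun hy => hcase (hc.mpr hy)), hx]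

lemma decode_congr {x y : ∀ i, Fin (α i)} {i : ℕ} (h : ∀ j ≤ i, x j = y j) :
    decode α x i = decode α y i := by
  have hx : x i = y i := h i le_rfl
  have hc : (∀ j < i, ((x j : ℕ) = 0)) ↔ (∀ j < i, ((y j : ℕ) = 0)) := by
    constructor <;> intro hh j hj
    · rw [← h j hj.le]; exact hh j hj
    · rw [h j hj.le]; exact hh j hj
  unfold decode
  by_cases hcase : ∀ j < i, ((x j : ℕ) = 0)
  · rw [if_pos hcase, if_pos (hc.mp hcase)]
    exact Fin.ext (by simp only [Fin.val_mk, congrArg Fin.val hx])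
  · rw [if_neg hcase, if_neg (fun hy => hcase (hc.mpr hy)), hx]

lemma carry_iff (x : ∀ i, Fin (α i)) (i : ℕ) :
    (∀ j < i, ((x j : ℕ) + 1 = α j)) ↔ (∀ j < i, ((odometer α x j : ℕ) = 0)) := by
  constructor
  · intro h j hj
    have hc : ∀ j' < j, ((x j' : ℕ) + 1 = α j') := fun j' hj' => h j' (hj'.trans hj)
    simp only [odometer, if_pos hc]
    rw [h j hj]
    exact Nat.mod_self _
  · intro h j hj
    induction j using Nat.strong_induction_on with
    | _ j ih =>
      have hc : ∀ j' < j, ((x j' : ℕ) + 1 = α j') := fun j' hj' => ih j' hj' (hj'.trans hj)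
      have h0 := h j hj
      simp only [odometer, if_pos hc] at h0
      have h1 : (x j : ℕ) < α j := (x j).isLt
      have h2 : α j ∣ (x j : ℕ) + 1 := Nat.dvd_of_mod_eq_zero h0
      have h3 := Nat.le_of_dvd (Nat.succ_pos _) h2
      omega

lemma nat_aux (v a : ℕ) (h : v < a) : ((v + 1) % a + (a - 1)) % a = v := by
  by_cases he : v + 1 = a
  · rw [he, Nat.mod_self, Nat.zero_add, Nat.mod_eq_of_lt (by omega)]
    omega
  · have hlt : v + 1 < a := by omega
    rw [Nat.mod_eq_of_lt hlt]
    have : v + 1 + (a - 1) = v + a := by omega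
    rw [this, Nat.add_mod_right, Nat.mod_eq_of_lt h]

lemma decode_odometer (x : ∀ i, Fin (α i)) : ∀ i, decode α (odometer α x) i = x i := by
  intro i
  by_cases hc : ∀ j < i, ((x j : ℕ) + 1 = α j)
  · have hz : ∀ j < i, ((odometer α x j : ℕ) = 0) := (carry_iff x i).mp hc
    have hi : (odometer α x i : ℕ) = ((x i : ℕ) + 1) % α i := by
      simp only [odometer, if_pos hc]
    simp only [decode, if_pos hz]
    apply Fin.ext
    simp only [hi]
    exact nat_aux _ _ (x i).isLt
  · have hz : ¬ ∀ j < i, ((odometer α x j : ℕ) = 0) :=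
      fun hz => hc ((carry_iff x i).mpr hz)
    have h1 : decode α (odometer α x) i = odometer α x i := by
      simp only [decode, if_neg hz]
    rw [h1]
    simp only [odometer, if_neg hc]


def extendF (α : ℕ → ℕ) (hα : ∀ i, 0 < α i) (n : ℕ)
    (b : ∀ i : Fin n, Fin (α i.1)) : ∀ i, Fin (α i) :=
  fun i => if h : i < n then b ⟨i, h⟩ else ⟨0, hα i⟩

lemma prefix_extendF (hα : ∀ i, 0 < α i) (n : ℕ) (b : ∀ i : Fin n, Fin (α i.1)) :
    prefixFun α n (extendF α hα n b) = b := by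
  funext i
  simp only [prefixFun, extendF, dif_pos i.2]

lemma prefix_comm (hα : ∀ i, 0 < α i) (G : (∀ i, Fin (α i)) → ∀ i, Fin (α i))
    (hG : ∀ (x y : ∀ i, Fin (α i)) (i : ℕ), (∀ j ≤ i, x j = y j) → G x i = G y i)
    (n : ℕ) (x : ∀ i, Fin (α i)) :
    prefixFun α n (G x) =
      (fun b => prefixFun α n (G (extendF α hα n b))) (prefixFun α n x) := by
  funext i
  refine hG x _ i.1 fun j hj => ?_
  simp only [extendF, prefixFun, dif_pos (lt_of_le_of_lt hj i.2)]

/-- the prefix system: bijections commuting with `odometer` and `decode` on prefixes. -/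
lemma prefix_system (hα : ∀ i, 0 < α i) (n : ℕ) :
    ∃ Φ Ψ : (∀ i : Fin n, Fin (α i.1)) → (∀ i : Fin n, Fin (α i.1)),
      Function.Bijective Φ ∧ Function.Bijective Ψ ∧
      Function.LeftInverse Ψ Φ ∧
      (∀ x, prefixFun α n (odometer α x) = Φ (prefixFun α n x)) ∧
      (∀ x, prefixFun α n (decode α x) = Ψ (prefixFun α n x)) := by
  set Φ : (∀ i : Fin n, Fin (α i.1)) → (∀ i : Fin n, Fin (α i.1)) :=
    fun b => prefixFun α n (odometer α (extendF α hα n b)) with hΦdef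
  set Ψ : (∀ i : Fin n, Fin (α i.1)) → (∀ i : Fin n, Fin (α i.1)) :=
    fun b => prefixFun α n (decode α (extendF α hα n b)) with hΨdef
  have hcommΦ : ∀ x, prefixFun α n (odometer α x) = Φ (prefixFun α n x) :=
    fun x => prefix_comm hα (odometer α) (fun x y i h => odometer_congr h) n x
  have hcommΨ : ∀ x, prefixFun α n (decode α x) = Ψ (prefixFun α n x) :=
    fun x => prefix_comm hα (decode α) (fun x y i h => decode_congr h) n x
  have hli : Function.LeftInverse Ψ Φ := by
    intro b
    have h1 : Φ b = prefixFun α n (odometer α (extendF α hα n b)) := rfl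
    rw [h1, ← hcommΨ (odometer α (extendF α hα n b))]
    have h2 : decode α (odometer α (extendF α hα n b)) = extendF α hα n b :=
      funext (decode_odometer _)
    rw [h2, prefix_extendF]
  have hΦbij : Function.Bijective Φ := Finite.injective_iff_bijective.mp hli.injective
  have hΨbij : Function.Bijective Ψ := Finite.surjective_iff_bijective.mp hli.surjective
  exact ⟨Φ, Ψ, hΦbij, hΨbij, hli, hcommΦ, hcommΨ⟩

lemma measurable_odometer (α : ℕ → ℕ) : Measurable (odometer α) := by
  apply measurable_pi_lambda
  intro i
  have : (fun x : ∀ i, Fin (α i) => odometer α x i) = fun x =>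
      if ∀ j < i, ((x j : ℕ) + 1 = α j)
      then (fun v : Fin (α i) => ⟨((v : ℕ) + 1) % α i, Nat.mod_lt _ v.pos⟩) (x i)
      else x i := rfl
  rw [this]
  apply Measurable.ite
  · have : {x : ∀ i, Fin (α i) | ∀ j < i, ((x j : ℕ) + 1 = α j)}
        = ⋂ (j : ℕ) (_ : j < i), (fun x : ∀ i, Fin (α i) => x j) ⁻¹' {v | (v : ℕ) + 1 = α j} := by
      ext x; simp
    rw [this]
    exact MeasurableSet.iInter fun j => MeasurableSet.iInter fun _ =>
      (measurable_pi_apply j) (Set.Countable.measurableSet (Set.to_countable _))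
  · exact (measurable_of_countable
      (fun v : Fin (α i) => (⟨((v : ℕ) + 1) % α i, Nat.mod_lt _ v.pos⟩ : Fin (α i)))).comp
      (measurable_pi_apply i)
  · exact measurable_pi_apply i



lemma measurableSet_cyl (n : ℕ) (a : ∀ i : Fin n, Fin (α i.1)) :
    MeasurableSet {x : ∀ i, Fin (α i) | prefixFun α n x = a} := by
  have h : {x : ∀ i, Fin (α i) | prefixFun α n x = a}
      = ⋂ i : Fin n, (fun x : ∀ i, Fin (α i) => x i.1) ⁻¹' {a i} := by
    ext x
    simp [prefixFun, funext_iff]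
  rw [h]
  exact MeasurableSet.iInter fun i =>
    (measurable_pi_apply i.1) (measurableSet_singleton (a i))

lemma measurableSet_prefix_preimage (n : ℕ) (S : Set (∀ i : Fin n, Fin (α i.1))) :
    MeasurableSet (prefixFun α n ⁻¹' S) := by
  have h : prefixFun α n ⁻¹' S = ⋃ a ∈ S, {x : ∀ i, Fin (α i) | prefixFun α n x = a} := by
    ext x; simp [eq_comm]
  rw [h]
  exact MeasurableSet.biUnion (Set.to_countable S) fun a _ => measurableSet_cyl n a

lemma measure_prefix_preimage (μ : Measure (∀ i, Fin (α i))) (n : ℕ)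
    (S : Set (∀ i : Fin n, Fin (α i.1))) :
    μ (prefixFun α n ⁻¹' S)
      = ∑ a ∈ S.toFinite.toFinset, μ {x | prefixFun α n x = a} := by
  have h : prefixFun α n ⁻¹' S
      = ⋃ a ∈ S.toFinite.toFinset, {x : ∀ i, Fin (α i) | prefixFun α n x = a} := by
    ext x; simp [Set.Finite.mem_toFinset, eq_comm]
  rw [h, measure_biUnion_finset]
  · intro a _ b _ hab
    exact Set.disjoint_left.mpr fun x hxa hxb => hab (hxa ▸ hxb)
  · exact fun a _ => measurableSet_cyl n a

/-- The key extension lemma. -/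
lemma key_bound (μ : Measure (∀ i, Fin (α i))) [IsFiniteMeasure μ]
    (Mn : ℝ≥0∞) (hMn0 : Mn ≠ 0) (hMnt : Mn ≠ ⊤)
    (Hcyl : ∀ (n : ℕ) (a b : ∀ i : Fin n, Fin (α i.1)),
      μ {x | prefixFun α n x = b} ≤ Mn * μ {x | prefixFun α n x = a})
    (F : (∀ i, Fin (α i)) → ∀ i, Fin (α i))
    (hF : ∀ n : ℕ, ∃ Φ : (∀ i : Fin n, Fin (α i.1)) → (∀ i : Fin n, Fin (α i.1)),
      Function.Bijective Φ ∧ ∀ x, prefixFun α n (F x) = Φ (prefixFun α n x))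
    (B : Set (∀ i, Fin (α i))) (hB : MeasurableSet B) :
    μ (F ⁻¹' B) ≤ Mn * μ B := by
  -- Step 2: sets depending on finitely many coordinates
  have hstep2 : ∀ (n : ℕ) (S : Set (∀ i : Fin n, Fin (α i.1))),
      μ (F ⁻¹' (prefixFun α n ⁻¹' S)) ≤ Mn * μ (prefixFun α n ⁻¹' S) := by
    intro n S
    obtain ⟨Φ, hΦbij, hΦ⟩ := hF n
    have hpre : F ⁻¹' (prefixFun α n ⁻¹' S) = prefixFun α n ⁻¹' (Φ ⁻¹' S) := by
      ext x
      simp only [Set.mem_preimage, hΦ x]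
    rw [hpre, measure_prefix_preimage μ n _, measure_prefix_preimage μ n S,
      Finset.mul_sum]
    have hre : ∑ a ∈ S.toFinite.toFinset, Mn * μ {x | prefixFun α n x = a}
        = ∑ b ∈ (Φ ⁻¹' S).toFinite.toFinset, Mn * μ {x | prefixFun α n x = Φ b} := by
      set e := Equiv.ofBijective Φ hΦbij with he
      refine Finset.sum_nbij' (i := fun a => e.symm a) (j := fun b => Φ b) ?_ ?_ ?_ ?_ ?_
      · intro a ha
        simp only [Set.Finite.mem_toFinset, Set.mem_preimage] at *
        have : Φ (e.symm a) = a := e.apply_symm_apply a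
        rw [this]; exact ha
      · intro b hb
        simp only [Set.Finite.mem_toFinset, Set.mem_preimage] at *
        exact hb
      · intro a _
        exact e.apply_symm_apply a
      · intro b _
        exact e.symm_apply_apply b
      · intro a ha
        have : Φ (e.symm a) = a := e.apply_symm_apply a
        rw [this]
    rw [hre]
    exact Finset.sum_le_sum fun b _ => Hcyl n (Φ b) b
  -- Step 3: open sets
  have hstep3 : ∀ U : Set (∀ i, Fin (α i)), IsOpen U → μ (F ⁻¹' U) ≤ Mn * μ U := by
    intro U hU
    set Sm : ∀ m : ℕ, Set (∀ i : Fin m, Fin (α i.1)) :=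
      fun m => {s | ∀ y, prefixFun α m y = s → y ∈ U} with hSm
    set D : ℕ → Set (∀ i, Fin (α i)) := fun m => prefixFun α m ⁻¹' Sm m with hD
    have hDU : ∀ m, D m ⊆ U := fun m x hx => hx x rfl
    have hmono : Monotone D := by
      intro m m' hmm x hx y hy
      refine hx y ?_
      funext i
      have : (⟨i.1, lt_of_lt_of_le i.2 hmm⟩ : Fin m') = _ := rfl
      exact congrFun hy ⟨i.1, lt_of_lt_of_le i.2 hmm⟩
    have hunion : ⋃ m, D m = U := by
      apply Set.Subset.antisymm (Set.iUnion_subset hDU)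
      intro x hx
      obtain ⟨I, u, hIu, hsub⟩ := isOpen_pi_iff.mp hU x hx
      refine Set.mem_iUnion.mpr ⟨(I.sup id) + 1, ?_⟩
      intro y hy
      apply hsub
      intro i hi
      have hilt : i < I.sup id + 1 := Nat.lt_succ_of_le (Finset.le_sup (f := id) hi)
      have : y i = x i := congrFun hy ⟨i, hilt⟩
      rw [this]
      exact (hIu i hi).2
    have hm1 : μ (F ⁻¹' U) = ⨆ m, μ (F ⁻¹' D m) := by
      rw [← hunion, Set.preimage_iUnion]
      exact (monotone_preimage.comp hmono).measure_iUnion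
    have hm2 : μ U = ⨆ m, μ (D m) := by
      rw [← hunion]
      exact hmono.measure_iUnion
    rw [hm1, hm2, ENNReal.mul_iSup]
    exact iSup_mono fun m => hstep2 m (Sm m)
  -- Step 4: general measurable sets via outer regularity
  have hfin : μ B ≠ ⊤ := measure_ne_top μ B
  refine ENNReal.le_of_forall_pos_le_add fun ε hε _ => ?_
  have hδ : (0 : ℝ≥0∞) < ε / Mn := ENNReal.div_pos (by exact_mod_cast hε.ne') hMnt
  obtain ⟨U, hBU, hUopen, hUlt⟩ :=
    Set.exists_isOpen_lt_of_lt B _ (ENNReal.lt_add_right hfin hδ.ne')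
  calc μ (F ⁻¹' B) ≤ μ (F ⁻¹' U) := measure_mono (Set.preimage_mono hBU)
    _ ≤ Mn * μ U := hstep3 U hUopen
    _ ≤ Mn * (μ B + ε / Mn) := by
        exact mul_le_mul_right hUlt.le Mn
    _ = Mn * μ B + ε := by
        rw [mul_add, ENNReal.mul_div_cancel hMn0 hMnt]


end RhoAux

/-- Transitivity necessary condition: if the composition operator `T_f` on `L^p(μ)` is
topologically transitive, then the sequence `ρ_n = ∏_{i=0}^n η_i/δ_i` is unbounded. -/
theorem rho_unbounded_of_transitive
    (α : ℕ → ℕ) (hα : ∀ i, 2 ≤ α i)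
    (w : ∀ i, Fin (α i) → NNReal)
    (hw_pos : ∀ i j, 0 < w i j) (hw_sum : ∀ i, ∑ j, w i j = 1)
    (μ : Measure (∀ i, Fin (α i))) (hμ : IsProductMeasure α w μ)
    (hstar : CondStar μ (odometer α))
    (p : ENNReal) [Fact (1 ≤ p)] (hp' : p ≠ ⊤)
    (T : Lp ℝ p μ →L[ℝ] Lp ℝ p μ)
    (hT : ∀ φ : Lp ℝ p μ, ⇑(T φ) =ᵐ[μ] (⇑φ ∘ odometer α))
    (htrans : TopTransitive ⇑T) :
    ∀ M : ℝ, ∃ n : ℕ,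
      M < ∏ i ∈ Finset.range (n + 1),
        (((⨆ j, w i j : NNReal) : ℝ) / ((⨅ j, w i j : NNReal) : ℝ)) := by
  by_contra hcon
  push_neg at hcon
  obtain ⟨M, hM⟩ := hcon
  classical
  have hα' : ∀ i, 0 < α i := fun i => lt_of_lt_of_le two_pos (hα i)
  set f := odometer α with hf
  set g := RhoAux.decode α with hg
  have hne : ∀ i, Nonempty (Fin (α i)) := fun i => ⟨⟨0, hα' i⟩⟩
  have hδ_le : ∀ i j, (⨅ j', w i j') ≤ w i j := fun i j => ciInf_le (OrderBot.bddBelow _) j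
  have hη_ge : ∀ i j, w i j ≤ ⨆ j', w i j' := fun i j =>
    le_ciSup (Set.finite_range _).bddAbove j
  have hδpos : ∀ i, 0 < ⨅ j, w i j := by
    intro i
    haveI := hne i
    obtain ⟨j0, hj0⟩ := Finite.exists_min (w i)
    exact lt_of_lt_of_le (hw_pos i j0) (le_ciInf hj0)
  set r : ℕ → ℝ≥0 := fun i => (⨆ j, w i j) / (⨅ j, w i j) with hr
  have hr1 : ∀ i, 1 ≤ r i := by
    intro i
    haveI := hne i
    have j := Classical.arbitrary (Fin (α i))
    exact (one_le_div (hδpos i)).mpr ((hδ_le i j).trans (hη_ge i j))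
  have hMcoe : ∀ n, (∏ i ∈ Finset.range (n+1), ((r i : ℝ))) ≤ M := by
    intro n
    have h1 := hM n
    simpa only [hr, NNReal.coe_div] using h1
  have hM1 : (1:ℝ) ≤ M := by
    refine le_trans ?_ (hMcoe 0)
    rw [Finset.prod_range_one]
    exact_mod_cast hr1 0
  set MN : ℝ≥0 := M.toNNReal with hMN
  have hMNr : ∀ n, (∏ i ∈ Finset.range n, r i) ≤ MN := by
    intro n
    rw [hMN, Real.le_toNNReal_iff_coe_le (le_trans zero_le_one hM1)]
    push_cast
    cases n with
    | zero => simpa using hM1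
    | succ n => exact hMcoe n
  set Mn : ℝ≥0∞ := (MN : ℝ≥0∞) with hMndef
  have hMN1 : (1:ℝ≥0) ≤ MN := by simpa using hMNr 0
  have hMn1 : (1 : ℝ≥0∞) ≤ Mn := by
    rw [hMndef]
    exact_mod_cast hMN1
  have hMn0 : Mn ≠ 0 := fun h => by simp [h] at hMn1
  have hMnt : Mn ≠ ⊤ := ENNReal.coe_ne_top
  -- cylinder comparison
  have Hcyl : ∀ (n : ℕ) (a b : ∀ i : Fin n, Fin (α i.1)),
      μ {x | RhoAux.prefixFun α n x = b} ≤ Mn * μ {x | RhoAux.prefixFun α n x = a} := by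
    intro n a b
    have hset : ∀ c : ∀ i : Fin n, Fin (α i.1),
        {x : ∀ i, Fin (α i) | RhoAux.prefixFun α n x = c}
          = {x : ∀ i, Fin (α i) | ∀ i : Fin n, x i.1 = c i} := by
      intro c; ext x; simp [RhoAux.prefixFun, funext_iff]
    rw [hset a, hset b, hμ n a, hμ n b]
    calc ∏ i : Fin n, (w i.1 (b i) : ℝ≥0∞)
        ≤ ∏ i : Fin n, ((r i.1 : ℝ≥0∞) * (w i.1 (a i) : ℝ≥0∞)) := by
          refine Finset.prod_le_prod' fun i _ => ?_
          have h1 : w i.1 (b i) ≤ r i.1 * w i.1 (a i) := by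
            calc w i.1 (b i) ≤ ⨆ j, w i.1 j := hη_ge i.1 (b i)
              _ = r i.1 * (⨅ j, w i.1 j) := (div_mul_cancel₀ _ (hδpos i.1).ne').symm
              _ ≤ r i.1 * w i.1 (a i) := mul_le_mul_right (hδ_le i.1 (a i)) _
          exact_mod_cast h1
      _ = (∏ i : Fin n, (r i.1 : ℝ≥0∞)) * ∏ i : Fin n, (w i.1 (a i) : ℝ≥0∞) :=
          Finset.prod_mul_distrib
      _ ≤ Mn * ∏ i : Fin n, (w i.1 (a i) : ℝ≥0∞) := by
          refine mul_le_mul_left ?_ _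
          have h2 : (∏ i : Fin n, (r i.1 : ℝ≥0∞)) = ((∏ i : Fin n, r i.1 : ℝ≥0) : ℝ≥0∞) := by
            push_cast; rfl
          have h3 : (∏ i : Fin n, r i.1) ≤ MN := by
            rw [Fin.prod_univ_eq_prod_range (fun i => r i) n]
            exact hMNr n
          rw [h2, hMndef]
          exact_mod_cast h3
  -- probability measure
  have huniv : μ Set.univ = 1 := by
    have h0 := hμ 0 (fun i => i.elim0)
    have hset : {x : ∀ i, Fin (α i) | ∀ i : Fin 0, x i.1 = i.elim0} = Set.univ := by
      ext x
      simp only [Set.mem_setOf_eq, Set.mem_univ, iff_true]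
      exact fun i => i.elim0
    rw [hset] at h0
    simpa using h0
  haveI : IsProbabilityMeasure μ := ⟨huniv⟩
  -- prefix systems for iterates
  have hsysf : ∀ k n, ∃ Φ, Function.Bijective Φ ∧
      ∀ x, RhoAux.prefixFun α n (f^[k] x) = Φ (RhoAux.prefixFun α n x) := by
    intro k n
    obtain ⟨Φ, Ψ, hΦbij, hΨbij, hli, hcΦ, hcΨ⟩ := RhoAux.prefix_system hα' n
    refine ⟨Φ^[k], hΦbij.iterate k, fun x => ?_⟩
    induction k with
    | zero => simp
    | succ k ih =>
        rw [Function.iterate_succ_apply', Function.iterate_succ_apply', hcΦ, ih]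
  have hsysg : ∀ k n, ∃ Φ, Function.Bijective Φ ∧
      ∀ x, RhoAux.prefixFun α n (g^[k] x) = Φ (RhoAux.prefixFun α n x) := by
    intro k n
    obtain ⟨Φ, Ψ, hΦbij, hΨbij, hli, hcΦ, hcΨ⟩ := RhoAux.prefix_system hα' n
    refine ⟨Ψ^[k], hΨbij.iterate k, fun x => ?_⟩
    induction k with
    | zero => simp
    | succ k ih =>
        rw [Function.iterate_succ_apply', Function.iterate_succ_apply', hcΨ, ih]
  have hgf : Function.LeftInverse g f := fun x => funext (RhoAux.decode_odometer x)
  have hfg : Function.LeftInverse f g := by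
    intro y
    funext i
    obtain ⟨Φ, Ψ, hΦbij, hΨbij, hli, hcΦ, hcΨ⟩ := RhoAux.prefix_system hα' (i+1)
    have hri : ∀ a, Φ (Ψ a) = a := fun a => hΨbij.injective (hli (Ψ a))
    have h1 : RhoAux.prefixFun α (i+1) (f (g y)) = RhoAux.prefixFun α (i+1) y := by
      rw [hcΦ (g y), hcΨ y, hri]
    exact congrFun h1 ⟨i, Nat.lt_succ_self i⟩
  have hmf : Measurable f := RhoAux.measurable_odometer α
  have hmfk : ∀ k, Measurable (f^[k]) := fun k => hmf.iterate k
  -- two-sided measure bounds, uniform in k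
  have hub : ∀ (k : ℕ) (B : Set (∀ i, Fin (α i))), MeasurableSet B →
      μ (f^[k] ⁻¹' B) ≤ Mn * μ B :=
    fun k B hB => RhoAux.key_bound μ Mn hMn0 hMnt Hcyl (f^[k]) (hsysf k) B hB
  have hlbb : ∀ (k : ℕ) (B : Set (∀ i, Fin (α i))), MeasurableSet B →
      μ B ≤ Mn * μ (f^[k] ⁻¹' B) := by
    intro k B hB
    have hC : MeasurableSet (f^[k] ⁻¹' B) := (hmfk k) hB
    have h1 := RhoAux.key_bound μ Mn hMn0 hMnt Hcyl (g^[k]) (hsysg k) _ hC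
    have h2 : g^[k] ⁻¹' (f^[k] ⁻¹' B) = B := by
      ext y
      simp only [Set.mem_preimage]
      rw [Function.LeftInverse.iterate hfg k y]
    rwa [h2] at h1
  have hν : ∀ k, Measure.map (f^[k]) μ ≤ Mn • μ := by
    intro k
    refine Measure.le_iff.mpr fun s hs => ?_
    rw [Measure.map_apply (hmfk k) hs, Measure.smul_apply, smul_eq_mul]
    exact hub k s hs
  have hν' : ∀ k, μ ≤ Mn • Measure.map (f^[k]) μ := by
    intro k
    refine Measure.le_iff.mpr fun s hs => ?_
    rw [Measure.smul_apply, smul_eq_mul, Measure.map_apply (hmfk k) hs]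
    exact hlbb k s hs
  have hac : ∀ k, Measure.map (f^[k]) μ ≪ μ := fun k =>
    (Measure.absolutelyContinuous_of_le (hν k)).trans Measure.smul_absolutelyContinuous
  -- a.e. composition
  have hcomp : ∀ (k : ℕ) (h₁ h₂ : (∀ i, Fin (α i)) → ℝ), h₁ =ᵐ[μ] h₂ →
      (h₁ ∘ f^[k]) =ᵐ[μ] (h₂ ∘ f^[k]) := by
    intro k h₁ h₂ hae
    have hnull : μ {x | ¬ h₁ x = h₂ x} = 0 := ae_iff.mp hae
    obtain ⟨N, hsub, hNmeas, hNnull⟩ := exists_measurable_superset_of_null hnull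
    have h1 : μ (f^[k] ⁻¹' N) = 0 := le_antisymm (by
      calc μ (f^[k] ⁻¹' N) ≤ Mn * μ N := hub k N hNmeas
        _ = 0 := by rw [hNnull, mul_zero]) (zero_le)
    refine ae_iff.mpr (measure_mono_null ?_ h1)
    intro x hx
    exact hsub hx
  -- iterates of T
  have hTiter : ∀ (k : ℕ) (φ : Lp ℝ p μ), ⇑((⇑T)^[k] φ) =ᵐ[μ] ⇑φ ∘ f^[k] := by
    intro k
    induction k with
    | zero =>
        intro φ
        simp only [Function.iterate_zero, id_eq]
        exact Filter.EventuallyEq.rfl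
    | succ k ih =>
        intro φ
        rw [Function.iterate_succ_apply]
        refine (ih (T φ)).trans ?_
        refine (hcomp k _ _ (hT φ)).trans ?_
        apply Filter.EventuallyEq.of_eq
        funext x
        simp only [Function.comp_apply, Function.iterate_succ_apply']
  -- norm bound
  have hp0 : p ≠ 0 := by
    have h1 : (1:ℝ≥0∞) ≤ p := Fact.out
    intro h
    rw [h] at h1
    exact (by norm_num : ¬ (1:ℝ≥0∞) ≤ 0) h1
  have hq : 0 < p.toReal := ENNReal.toReal_pos hp0 hp'
  set q := p.toReal with hqdef
  set K : ℝ := (Mn ^ (1/q)).toReal with hK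
  have hK0 : 0 ≤ K := ENNReal.toReal_nonneg
  have hKlt : Mn ^ (1/q) ≠ ⊤ := ENNReal.rpow_ne_top_of_nonneg (by positivity) hMnt
  have hnormb : ∀ (k : ℕ) (ψ : Lp ℝ p μ), ‖ψ‖ ≤ K * ‖(⇑T)^[k] ψ‖ := by
    intro k ψ
    have hψm : AEMeasurable (fun y => ((‖ψ y‖₊ : ℝ≥0∞)) ^ q) (Measure.map (f^[k]) μ) :=
      (AEStronglyMeasurable.enorm ((Lp.aestronglyMeasurable ψ).mono_ac (hac k))).pow_const q
    have hmap : ∫⁻ y, (‖ψ y‖₊ : ℝ≥0∞) ^ q ∂(Measure.map (f^[k]) μ)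
        = ∫⁻ x, (‖ψ (f^[k] x)‖₊ : ℝ≥0∞) ^ q ∂μ :=
      lintegral_map' hψm (hmfk k).aemeasurable
    have hchain : ∫⁻ x, (‖ψ x‖₊ : ℝ≥0∞) ^ q ∂μ
        ≤ Mn * ∫⁻ x, (‖ψ (f^[k] x)‖₊ : ℝ≥0∞) ^ q ∂μ := by
      calc ∫⁻ x, (‖ψ x‖₊ : ℝ≥0∞) ^ q ∂μ
          ≤ ∫⁻ x, (‖ψ x‖₊ : ℝ≥0∞) ^ q ∂(Mn • (Measure.map (f^[k]) μ)) :=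
            lintegral_mono' (hν' k) le_rfl
        _ = Mn * ∫⁻ y, (‖ψ y‖₊ : ℝ≥0∞) ^ q ∂(Measure.map (f^[k]) μ) :=
            lintegral_smul_measure _ _
        _ = Mn * ∫⁻ x, (‖ψ (f^[k] x)‖₊ : ℝ≥0∞) ^ q ∂μ := by rw [hmap]
    have hee1 : eLpNorm (⇑ψ) p μ = (∫⁻ x, (‖ψ x‖₊ : ℝ≥0∞) ^ q ∂μ) ^ (1/q) :=
      eLpNorm_eq_lintegral_rpow_enorm_toReal hp0 hp'
    have hee2 : eLpNorm (⇑ψ ∘ f^[k]) p μ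
        = (∫⁻ x, (‖ψ (f^[k] x)‖₊ : ℝ≥0∞) ^ q ∂μ) ^ (1/q) :=
      eLpNorm_eq_lintegral_rpow_enorm_toReal hp0 hp'
    have hmono : eLpNorm (⇑ψ) p μ ≤ Mn ^ (1/q) * eLpNorm (⇑ψ ∘ f^[k]) p μ := by
      rw [hee1, hee2, ← ENNReal.mul_rpow_of_nonneg _ _ (by positivity)]
      exact ENNReal.rpow_le_rpow hchain (by positivity)
    have hcongr : eLpNorm (⇑ψ ∘ f^[k]) p μ = eLpNorm (⇑((⇑T)^[k] ψ)) p μ :=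
      (eLpNorm_congr_ae (hTiter k ψ)).symm
    rw [hcongr] at hmono
    have hfin2 : Mn ^ (1/q) * eLpNorm (⇑((⇑T)^[k] ψ)) p μ ≠ ⊤ :=
      ENNReal.mul_ne_top hKlt (Lp.eLpNorm_ne_top _)
    calc ‖ψ‖ = (eLpNorm (⇑ψ) p μ).toReal := Lp.norm_def ψ
      _ ≤ (Mn ^ (1/q) * eLpNorm (⇑((⇑T)^[k] ψ)) p μ).toReal := ENNReal.toReal_mono hfin2 hmono
      _ = K * ‖(⇑T)^[k] ψ‖ := by rw [ENNReal.toReal_mul, hK, Lp.norm_def]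
  -- final contradiction
  set φ₀ : Lp ℝ p μ :=
    indicatorConstLp p MeasurableSet.univ (measure_ne_top μ _) (K + 2 : ℝ) with hφ₀
  have hφ₀norm : ‖φ₀‖ = K + 2 := by
    rw [hφ₀, norm_indicatorConstLp hp0 hp', probReal_univ]
    simp [Real.norm_eq_abs, abs_of_nonneg (by positivity : (0:ℝ) ≤ K + 2)]
  obtain ⟨k, hk1, hne2⟩ := htrans (Metric.ball φ₀ 1) (Metric.ball 0 1)
      Metric.isOpen_ball Metric.isOpen_ball ⟨φ₀, Metric.mem_ball_self one_pos⟩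
      ⟨0, Metric.mem_ball_self one_pos⟩
  obtain ⟨z, ⟨ψ, hψU, hψz⟩, hzV⟩ := hne2
  have h1 : ‖ψ‖ ≤ K * ‖(⇑T)^[k] ψ‖ := hnormb k ψ
  have h2 : ‖(⇑T)^[k] ψ‖ < 1 := by
    rw [hψz]
    exact mem_ball_zero_iff.mp hzV
  have h2' : (0:ℝ) ≤ ‖(⇑T)^[k] ψ‖ := norm_nonneg _
  have h3 : K + 1 < ‖ψ‖ := by
    have hd : dist ψ φ₀ < 1 := Metric.mem_ball.mp hψU
    have h4 : ‖φ₀‖ - ‖ψ‖ ≤ dist ψ φ₀ := by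
      rw [dist_eq_norm, norm_sub_rev]
      exact norm_sub_norm_le _ _
    rw [hφ₀norm] at h4
    linarith
  nlinarith [mul_le_of_le_one_right hK0 h2.le]
end
end

section
/- Let l ∈ ℕ, let a, b ∈ A_l be two distinct elements, and let 0 < ε < (1/16)·min{μ_l(a), μ_l(b)}. Then there exists an integer m ≥ ∏_{i=0}^{l−1} α_i such that for every Borel set B ⊆ 𝒜 with μ(B) > 1 − ε one has f^m(B) ∩ B ≠ ∅. -/
open MeasureTheory Filter Set Topology ENNReal NNReal

noncomputable section

namespace OdoAux

variable (α : ℕ → ℕ)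

/-- the "+1 at level l" map -/
def odoAt (l : ℕ) (x : ∀ i, Fin (α i)) : ∀ i, Fin (α i) :=
  fun i =>
    if l ≤ i ∧ ∀ j < i, l ≤ j → ((x j : ℕ) + 1 = α j)
    then ⟨((x i : ℕ) + 1) % α i, Nat.mod_lt _ (x i).pos⟩
    else x i

lemma odometer_eq_odoAt : odometer α = odoAt α 0 := by
  funext x i
  simp only [odometer, odoAt]
  by_cases h : ∀ j < i, ((x j : ℕ) + 1 = α j)
  · rw [if_pos h, if_pos ⟨Nat.zero_le _, fun j hj _ => h j hj⟩]
  · rw [if_neg h, if_neg]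
    rintro ⟨-, h2⟩
    exact h fun j hj => h2 j hj (Nat.zero_le _)

variable {α}

lemma odoAt_step {l : ℕ} {x : ∀ i, Fin (α i)} (h : (x l : ℕ) + 1 < α l) :
    odoAt α l x = Function.update x l ⟨(x l : ℕ) + 1, h⟩ := by
  funext i
  rcases lt_trichotomy i l with hi | rfl | hi
  · rw [Function.update_of_ne hi.ne, odoAt, if_neg (fun hc => absurd hc.1 (by omega))]
  · rw [Function.update_self, odoAt, if_pos ⟨le_rfl, fun j hj hj2 => by omega⟩]
    exact Fin.ext (Nat.mod_eq_of_lt h)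
  · rw [Function.update_of_ne hi.ne', odoAt, if_neg]
    rintro ⟨-, h2⟩
    exact absurd (h2 l hi le_rfl) (by omega)

lemma odoAt_iterate_of_lt {l : ℕ} {x : ∀ i, Fin (α i)} {c : ℕ} (h : (x l : ℕ) + c < α l) :
    (odoAt α l)^[c] x = Function.update x l ⟨(x l : ℕ) + c, h⟩ := by
  induction c with
  | zero =>
    rw [Function.iterate_zero_apply, show (⟨(x l : ℕ) + 0, h⟩ : Fin (α l)) = x l from Fin.ext (by simp), Function.update_eq_self]
  | succ c ih =>
    rw [Function.iterate_succ_apply', ih (by omega), odoAt_step (by simp; omega)]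
    simp only [Function.update_self, Function.update_idem]
    congr 1

lemma odoAt_step_top {l : ℕ} {x : ∀ i, Fin (α i)} (h : (x l : ℕ) + 1 = α l) :
    odoAt α l x = Function.update (odoAt α (l + 1) x) l ⟨0, (x l).pos⟩ := by
  funext i
  rcases lt_trichotomy i l with hi | rfl | hi
  · rw [Function.update_of_ne hi.ne, odoAt, if_neg (fun hc => absurd hc.1 (by omega))]
    exact (if_neg (fun hc : _ ∧ _ => absurd hc.1 (by omega))).symm
  · rw [Function.update_self, odoAt, if_pos ⟨le_rfl, fun j hj hj2 => by omega⟩]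
    exact Fin.ext (by simp [h])
  · rw [Function.update_of_ne hi.ne', odoAt, odoAt]
    by_cases hc : ∀ j < i, l + 1 ≤ j → ((x j : ℕ) + 1 = α j)
    · rw [if_pos ⟨hi.le, fun j hj hj2 => by
        rcases eq_or_lt_of_le hj2 with rfl | hj3
        · exact h
        · exact hc j hj hj3⟩, if_pos ⟨by omega, hc⟩]
    · rw [if_neg, if_neg]
      · rintro ⟨-, h2⟩; exact hc fun j hj hj2 => h2 j hj (by omega)
      · rintro ⟨-, h2⟩; exact hc fun j hj hj2 => h2 j hj (by omega)

lemma odoAt_update_lt {l j : ℕ} (hj : j < l) (x : ∀ i, Fin (α i)) (v : Fin (α j)) :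
    odoAt α l (Function.update x j v) = Function.update (odoAt α l x) j v := by
  funext i
  rcases eq_or_ne i j with rfl | hij
  · rw [Function.update_self, odoAt, if_neg (fun hc => absurd hc.1 (by omega)),
      Function.update_self]
  · rw [Function.update_of_ne hij]
    have hval : ∀ k, l ≤ k → Function.update x j v k = x k := fun k hk =>
      Function.update_of_ne (by omega) _ _
    by_cases hi : l ≤ i
    · simp only [odoAt]
      have hcond : (∀ k < i, l ≤ k → ((Function.update x j v k : ℕ) + 1 = α k)) ↔
          (∀ k < i, l ≤ k → ((x k : ℕ) + 1 = α k)) := by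
        constructor
        · intro hc k hk hk2; rw [← hval k hk2]; exact hc k hk hk2
        · intro hc k hk hk2; rw [hval k hk2]; exact hc k hk hk2
      by_cases hc : ∀ k < i, l ≤ k → ((x k : ℕ) + 1 = α k)
      · rw [if_pos ⟨hi, hcond.mpr hc⟩, if_pos ⟨hi, hc⟩]
        exact Fin.ext (by simp only [Fin.val_mk]; rw [hval i hi])
      · rw [if_neg (fun h2 : _ ∧ _ => hc (hcond.mp h2.2)), if_neg (fun h2 : _ ∧ _ => hc h2.2)]
        exact hval i hi
    · rw [odoAt, if_neg (fun hc => hi hc.1), odoAt, if_neg (fun hc => hi hc.1),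
        Function.update_of_ne hij]

lemma odoAt_apply_lt {l : ℕ} (x : ∀ i, Fin (α i)) {i : ℕ} (hi : i < l) :
    odoAt α l x i = x i := by
  rw [odoAt, if_neg (fun hc => absurd hc.1 (by omega))]

lemma odoAt_iterate_full (l : ℕ) (x : ∀ i, Fin (α i)) :
    (odoAt α l)^[α l] x = odoAt α (l + 1) x := by
  have hx := (x l).isLt
  have hsplit : α l = (x l : ℕ) + (1 + (α l - 1 - (x l : ℕ))) := by omega
  rw [hsplit, Function.iterate_add_apply, Function.iterate_add_apply,
    odoAt_iterate_of_lt (c := α l - 1 - (x l : ℕ)) (by omega)]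
  have h1 : ((Function.update x l ⟨(x l : ℕ) + (α l - 1 - (x l : ℕ)), by omega⟩) l : ℕ) + 1 = α l := by
    rw [Function.update_self]; simp only [Fin.val_mk]; omega
  rw [Function.iterate_one, odoAt_step_top h1, odoAt_update_lt (by omega), Function.update_idem]
  have h0 : ((Function.update (odoAt α (l+1) x) l ⟨0, (x l).pos⟩) l : ℕ) + (x l : ℕ) < α l := by
    rw [Function.update_self]; simp only [Fin.val_mk]; omega
  rw [odoAt_iterate_of_lt h0, Function.update_idem]
  funext i
  rcases eq_or_ne i l with rfl | hi
  · rw [Function.update_self, odoAt_apply_lt _ (by omega)]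
    apply Fin.ext
    simp [Function.update_self]
  · rw [Function.update_of_ne hi]

lemma odometer_iterate_prod (α : ℕ → ℕ) (l : ℕ) :
    (odometer α)^[∏ i ∈ Finset.range l, α i] = odoAt α l := by
  induction l with
  | zero => simp [odometer_eq_odoAt]
  | succ l ih =>
    rw [Finset.prod_range_succ, Function.iterate_mul, ih]
    funext x
    exact odoAt_iterate_full l x

end OdoAux

namespace MeasAux

open OdoAux

variable (α : ℕ → ℕ)

/-- basic cylinder -/
def gen (n : ℕ) (v : ∀ i : Fin n, Fin (α i.1)) : Set (∀ i, Fin (α i)) :=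
  {x | ∀ i : Fin n, x i.1 = v i}

lemma measurableSet_gen (n : ℕ) (v : ∀ i : Fin n, Fin (α i.1)) :
    MeasurableSet (gen α n v) := by
  have : gen α n v = ⋂ i : Fin n, (fun x : ∀ i, Fin (α i) => x i.1) ⁻¹' {v i} := by
    ext x; simp [gen]
  rw [this]
  exact MeasurableSet.iInter fun i => (measurable_pi_apply _) (measurableSet_singleton _)

lemma gen_disjoint {n : ℕ} {v v' : ∀ i : Fin n, Fin (α i.1)} (hv : v ≠ v') :
    Disjoint (gen α n v) (gen α n v') := by
  rw [Set.disjoint_left]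
  intro x hx hx'
  exact hv (funext fun i => (hx i).symm.trans (hx' i))

lemma coord_eq_iUnion {j n : ℕ} (hjn : j < n) (c : Fin (α j)) :
    {x : ∀ i, Fin (α i) | x j = c} =
      ⋃ v : {v : ∀ i : Fin n, Fin (α i.1) // v ⟨j, hjn⟩ = c}, gen α n v.1 := by
  ext x
  simp only [Set.mem_setOf_eq, Set.mem_iUnion]
  constructor
  · intro hx
    exact ⟨⟨fun i => x i.1, hx⟩, fun i => rfl⟩
  · rintro ⟨v, hv⟩
    exact (hv ⟨j, hjn⟩).trans v.2

lemma measure_univ_eq_one (w : ∀ i, Fin (α i) → NNReal) (μ : Measure (∀ i, Fin (α i)))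
    (hμ : IsProductMeasure α w μ) : μ Set.univ = 1 := by
  have h0 := hμ 0 (fun i => i.elim0)
  have hset : {x : ∀ i, Fin (α i) | ∀ i : Fin 0, x i.1 = i.elim0} = Set.univ :=
    Set.eq_univ_of_forall fun x i => i.elim0
  rw [hset] at h0
  simpa using h0

lemma measure_coord (w : ∀ i, Fin (α i) → NNReal) (hw_sum : ∀ i, ∑ j, w i j = 1)
    (μ : Measure (∀ i, Fin (α i))) (hμ : IsProductMeasure α w μ) (j : ℕ) (c : Fin (α j)) :
    μ {x : ∀ i, Fin (α i) | x j = c} = (w j c : ENNReal) := by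
  have hjn : j < j + 1 := Nat.lt_succ_self j
  rw [coord_eq_iUnion α hjn c]
  rw [measure_iUnion (fun v v' hvv' => gen_disjoint α (fun h => hvv' (Subtype.ext h)))
    (fun v => measurableSet_gen α _ _), tsum_fintype]
  have hval : ∀ v : {v : ∀ i : Fin (j+1), Fin (α i.1) // v ⟨j, hjn⟩ = c},
      μ (gen α (j+1) v.1) = ∏ i : Fin (j+1), (w i.1 (v.1 i) : ENNReal) := fun v => hμ (j+1) v.1
  rw [Finset.sum_congr rfl (fun v _ => hval v)]
  -- reindex by snoc
  let e : (∀ i : Fin j, Fin (α i.1)) ≃ {v : ∀ i : Fin (j+1), Fin (α i.1) // v ⟨j, hjn⟩ = c} :=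
    { toFun := fun p => ⟨Fin.snoc p c, Fin.snoc_last _ _⟩
      invFun := fun v i => v.1 i.castSucc
      left_inv := fun p => funext fun i => by simp
      right_inv := fun v => Subtype.ext (funext fun i => by
        refine Fin.lastCases ?_ ?_ i
        · simpa using (show c = v.1 (Fin.last j) from v.2.symm)
        · intro i
          simp) }
  rw [← Equiv.sum_comp e (fun v => ∏ i : Fin (j+1), (w i.1 (v.1 i) : ENNReal))]
  have hterm : ∀ p : ∀ i : Fin j, Fin (α i.1),
      (∏ i : Fin (j+1), (w i.1 ((e p).1 i) : ENNReal)) =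
        (∏ i : Fin j, (w i.1 (p i) : ENNReal)) * (w j c : ENNReal) := by
    intro p
    simp only [e, Equiv.coe_fn_mk, Fin.prod_univ_castSucc, Fin.snoc_castSucc, Fin.snoc_last,
      Fin.coe_castSucc, Fin.val_last]
  rw [Finset.sum_congr rfl (fun p _ => hterm p), ← Finset.sum_mul]
  have hone : ∑ p : ∀ i : Fin j, Fin (α i.1), ∏ i : Fin j, (w i.1 (p i) : ENNReal) = 1 := by
    have h := Finset.prod_univ_sum (fun i : Fin j => (Finset.univ : Finset (Fin (α i.1))))
      (fun i y => (w i.1 y : ENNReal))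
    rw [Fintype.piFinset_univ] at h
    rw [← h]
    apply Finset.prod_eq_one
    intro i _
    rw [← ENNReal.coe_finset_sum, hw_sum i.1, ENNReal.coe_one]
  rw [hone, one_mul]

/-- the generating family: cylinders of length > l -/
def D (l : ℕ) : Set (Set (∀ i, Fin (α i))) :=
  {S | ∃ n, ∃ v : ∀ i : Fin n, Fin (α i.1), l < n ∧ S = gen α n v}

lemma gen_subset_of_nonempty {n n' : ℕ} (h : n ≤ n') {v : ∀ i : Fin n, Fin (α i.1)}
    {v' : ∀ i : Fin n', Fin (α i.1)} (hx : (gen α n v ∩ gen α n' v').Nonempty) :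
    gen α n' v' ⊆ gen α n v := by
  obtain ⟨x, hx1, hx2⟩ := hx
  intro y hy i
  calc y i.1 = v' ⟨i.1, lt_of_lt_of_le i.2 h⟩ := hy ⟨i.1, lt_of_lt_of_le i.2 h⟩
    _ = x i.1 := (hx2 ⟨i.1, lt_of_lt_of_le i.2 h⟩).symm
    _ = v i := hx1 i

lemma isPiSystem_D (l : ℕ) : IsPiSystem (D α l) := by
  rintro s ⟨n, v, hn, rfl⟩ t ⟨n', v', hn', rfl⟩ hne
  rcases le_total n n' with h | h
  · refine ⟨n', v', hn', ?_⟩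
    rw [Set.inter_eq_self_of_subset_right (gen_subset_of_nonempty α h hne)]
  · refine ⟨n, v, hn, ?_⟩
    rw [Set.inter_comm] at hne ⊢
    rw [Set.inter_eq_self_of_subset_right (gen_subset_of_nonempty α h hne)]

lemma pi_eq_generateFrom_D (l : ℕ) :
    (inferInstance : MeasurableSpace (∀ i, Fin (α i))) = .generateFrom (D α l) := by
  refine le_antisymm (iSup_le fun i => ?_) (MeasurableSpace.generateFrom_le ?_)
  · have hmeas : @Measurable _ _ (MeasurableSpace.generateFrom (D α l)) _
        (fun x : ∀ i, Fin (α i) => x i) := by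
      refine @measurable_to_countable' (Fin (α i)) (∀ i, Fin (α i)) _ _
        (MeasurableSpace.generateFrom (D α l)) _ ?_
      intro c
      have : (fun x : ∀ i, Fin (α i) => x i) ⁻¹' {c} = {x : ∀ i, Fin (α i) | x i = c} := rfl
      rw [this, coord_eq_iUnion α (Nat.lt_succ_of_le (le_max_left i l)) c]
      exact MeasurableSet.iUnion fun v =>
        MeasurableSpace.measurableSet_generateFrom
          ⟨max i l + 1, v.1, Nat.lt_succ_of_le (le_max_right i l), rfl⟩
    exact measurable_iff_comap_le.mp hmeas
  · rintro s ⟨n, v, hn, rfl⟩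
    exact measurableSet_gen α n v

section Swap

variable {α} (l : ℕ) (a b : Fin (α l))

/-- the involution swapping `a` and `b` in coordinate `l` -/
def T (x : ∀ i, Fin (α i)) : ∀ i, Fin (α i) :=
  Function.update x l (Equiv.swap a b (x l))

lemma T_apply_ne (x : ∀ i, Fin (α i)) {i : ℕ} (hi : i ≠ l) : T l a b x i = x i :=
  Function.update_of_ne hi _ _

lemma T_apply_eq (x : ∀ i, Fin (α i)) : T l a b x l = Equiv.swap a b (x l) :=
  Function.update_self _ _ _

lemma T_invol (x : ∀ i, Fin (α i)) : T l a b (T l a b x) = x := by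
  funext i
  rcases eq_or_ne i l with rfl | hi
  · rw [T_apply_eq, T_apply_eq, Equiv.swap_apply_self]
  · rw [T_apply_ne _ _ _ _ hi, T_apply_ne _ _ _ _ hi]

lemma T_measurable : Measurable (T l a b) := by
  apply measurable_pi_lambda
  intro i
  by_cases h : i = l
  · subst h
    have : (fun x : ∀ k, Fin (α k) => T i a b x i) = fun x => Equiv.swap a b (x i) := by
      funext x; exact T_apply_eq _ _ _ _
    rw [this]
    exact (measurable_of_countable _).comp (measurable_pi_apply i)
  · have : (fun x : ∀ k, Fin (α k) => T l a b x i) = fun x => x i := by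
      funext x; exact T_apply_ne _ _ _ _ h
    rw [this]
    exact measurable_pi_apply i

lemma T_preimage_gen {n : ℕ} (hn : l < n) (v : ∀ i : Fin n, Fin (α i.1)) :
    T l a b ⁻¹' gen α n v =
      gen α n (Function.update v ⟨l, hn⟩ (Equiv.swap a b (v ⟨l, hn⟩))) := by
  ext x
  simp only [gen, Set.mem_preimage, Set.mem_setOf_eq]
  constructor
  · intro h i
    by_cases hiL : i = ⟨l, hn⟩
    · subst hiL
      rw [Function.update_self]
      have h2 : T l a b x l = v ⟨l, hn⟩ := h ⟨l, hn⟩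
      rw [T_apply_eq] at h2
      have h3 := congrArg (Equiv.swap a b) h2
      rw [Equiv.swap_apply_self] at h3
      exact h3
    · rw [Function.update_of_ne hiL]
      have h2 := h i
      rwa [T_apply_ne _ _ _ _ (fun hh : i.1 = l => hiL (Fin.ext hh))] at h2
  · intro h i
    by_cases hiL : i = ⟨l, hn⟩
    · subst hiL
      have h2 : x l = Equiv.swap a b (v ⟨l, hn⟩) := by
        have := h ⟨l, hn⟩
        rwa [Function.update_self] at this
      show T l a b x l = v ⟨l, hn⟩
      rw [T_apply_eq, h2, Equiv.swap_apply_self]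
    · have h2 := h i
      rw [Function.update_of_ne hiL] at h2
      rwa [T_apply_ne _ _ _ _ (fun hh : i.1 = l => hiL (Fin.ext hh))]

lemma T_preimage_coord : T l a b ⁻¹' {x : ∀ i, Fin (α i) | x l = a} = {x : ∀ i, Fin (α i) | x l = b} := by
  ext x
  simp only [Set.mem_preimage, Set.mem_setOf_eq, T_apply_eq]
  constructor
  · intro h
    rw [← Equiv.swap_apply_self a b (x l), h, Equiv.swap_apply_left]
  · intro h
    rw [h, Equiv.swap_apply_right]

end Swap

lemma measurableSet_coord (j : ℕ) (c : Fin (α j)) :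
    MeasurableSet {x : ∀ i, Fin (α i) | x j = c} := by
  have : {x : ∀ i, Fin (α i) | x j = c} = (fun x : ∀ i, Fin (α i) => x j) ⁻¹' {c} := by
    ext x; simp
  rw [this]
  exact (measurable_pi_apply j) (measurableSet_singleton c)

section Key

variable {α}

lemma key_measure_eq (w : ∀ i, Fin (α i) → NNReal) (μ : Measure (∀ i, Fin (α i)))
    (hw_sum : ∀ i, ∑ j, w i j = 1) (hμ : IsProductMeasure α w μ)
    (l : ℕ) (a b : Fin (α l)) :
    ∀ S : Set (∀ i, Fin (α i)), MeasurableSet S → S ⊆ {x | x l = a} →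
      (w l b : ENNReal) * μ S = (w l a : ENNReal) * μ (T l a b ⁻¹' S) := by
  have hCa : MeasurableSet {x : ∀ i, Fin (α i) | x l = a} := by
    have : {x : ∀ i, Fin (α i) | x l = a} = (fun x : ∀ i, Fin (α i) => x l) ⁻¹' {a} := by
      ext x; simp
    rw [this]
    exact (measurable_pi_apply l) (measurableSet_singleton a)
  haveI : IsProbabilityMeasure μ := ⟨measure_univ_eq_one α w μ hμ⟩
  haveI hfin : IsFiniteMeasure ((w l b : ENNReal) • μ.restrict {x : ∀ i, Fin (α i) | x l = a}) := by
    constructor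
    rw [Measure.smul_apply, smul_eq_mul]
    exact ENNReal.mul_lt_top ENNReal.coe_lt_top (measure_lt_top _ _)
  have hext : (w l b : ENNReal) • μ.restrict {x | x l = a} =
      (w l a : ENNReal) • ((μ.map (T l a b)).restrict {x | x l = a}) := by
    refine ext_of_generate_finite (D α l) (pi_eq_generateFrom_D α l) (isPiSystem_D α l) ?_ ?_
    · rintro s ⟨n, v, hn, rfl⟩
      rw [Measure.smul_apply, Measure.smul_apply,
        Measure.restrict_apply (measurableSet_gen α n v),
        Measure.restrict_apply (measurableSet_gen α n v), smul_eq_mul, smul_eq_mul]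
      by_cases hva : v ⟨l, hn⟩ = a
      · have hsub : gen α n v ⊆ {x | x l = a} := by
          intro x hx
          have h2 : x l = v ⟨l, hn⟩ := hx ⟨l, hn⟩
          show x l = a
          rw [h2, hva]
        have hg1 : μ (gen α n v) = ∏ i : Fin n, (w i.1 (v i) : ENNReal) := hμ n v
        have hg2 : μ (gen α n (Function.update v ⟨l, hn⟩ (Equiv.swap a b (v ⟨l, hn⟩)))) =
            ∏ i : Fin n, ((w i.1 ((Function.update v ⟨l, hn⟩ (Equiv.swap a b (v ⟨l, hn⟩))) i)) : ENNReal) :=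
          hμ n _
        rw [Set.inter_eq_left.mpr hsub,
          Measure.map_apply (T_measurable l a b) (measurableSet_gen α n v),
          T_preimage_gen l a b hn v, hg1, hg2]
        rw [← Finset.mul_prod_erase Finset.univ _ (Finset.mem_univ (⟨l, hn⟩ : Fin n)),
          ← Finset.mul_prod_erase Finset.univ
            (fun i => ((w i.1 ((Function.update v ⟨l, hn⟩ (Equiv.swap a b (v ⟨l, hn⟩))) i) : ENNReal)))
            (Finset.mem_univ (⟨l, hn⟩ : Fin n))]
        have herase : ∏ i ∈ Finset.univ.erase (⟨l, hn⟩ : Fin n),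
            ((w i.1 ((Function.update v ⟨l, hn⟩ (Equiv.swap a b (v ⟨l, hn⟩))) i)) : ENNReal) =
            ∏ i ∈ Finset.univ.erase (⟨l, hn⟩ : Fin n), ((w i.1 (v i)) : ENNReal) := by
          refine Finset.prod_congr rfl fun i hi => ?_
          rw [Function.update_of_ne (Finset.ne_of_mem_erase hi)]
        rw [herase, Function.update_self, hva, Equiv.swap_apply_left]
        show ((w l b : ENNReal)) * (((w l a : ENNReal)) * _) = ((w l a : ENNReal)) * (((w l b : ENNReal)) * _)
        ring
      · have hinter : gen α n v ∩ {x : ∀ i, Fin (α i) | x l = a} = ∅ := by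
          rw [Set.eq_empty_iff_forall_notMem]
          rintro x ⟨hx1, hx2⟩
          exact hva ((hx1 ⟨l, hn⟩).symm.trans hx2)
        rw [hinter]
        simp
    · rw [Measure.smul_apply, Measure.smul_apply,
        Measure.restrict_apply MeasurableSet.univ, Measure.restrict_apply MeasurableSet.univ,
        Set.univ_inter, smul_eq_mul, smul_eq_mul,
        Measure.map_apply (T_measurable l a b) hCa, T_preimage_coord l a b,
        measure_coord α w hw_sum μ hμ l a, measure_coord α w hw_sum μ hμ l b]
      rw [← ENNReal.coe_mul, ← ENNReal.coe_mul, mul_comm]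
  intro S hS hSsub
  have h1 : ((w l b : ENNReal) • μ.restrict {x : ∀ i, Fin (α i) | x l = a}) S = (w l b : ENNReal) * μ S := by
    rw [Measure.smul_apply, Measure.restrict_apply hS, Set.inter_eq_left.mpr hSsub,
      smul_eq_mul]
  have h2 : ((w l a : ENNReal) • ((μ.map (T l a b)).restrict {x : ∀ i, Fin (α i) | x l = a})) S =
      (w l a : ENNReal) * μ (T l a b ⁻¹' S) := by
    rw [Measure.smul_apply, Measure.restrict_apply hS, Set.inter_eq_left.mpr hSsub,
      smul_eq_mul, Measure.map_apply (T_measurable l a b) hS]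
  rw [← h1, ← h2, hext]

end Key

end MeasAux

open OdoAux MeasAux in
lemma main_aux (α : ℕ → ℕ) (hα : ∀ i, 2 ≤ α i)
    (w : ∀ i, Fin (α i) → NNReal)
    (hw_pos : ∀ i j, 0 < w i j) (hw_sum : ∀ i, ∑ j, w i j = 1)
    (μ : Measure (∀ i, Fin (α i))) (hμ : IsProductMeasure α w μ)
    (l : ℕ) (a b : Fin (α l)) (hab : (a : ℕ) < (b : ℕ))
    (ε : ℝ) (hε : 0 < ε) (hε' : ε < (1 / 16) * min ((w l a : ℝ)) ((w l b : ℝ))) :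
    ∃ m : ℕ, (∏ i ∈ Finset.range l, α i) ≤ m ∧
      ∀ B : Set (∀ i, Fin (α i)), MeasurableSet B → ENNReal.ofReal (1 - ε) < μ B →
        ((odometer α)^[m] '' B ∩ B).Nonempty := by
  set N := ∏ i ∈ Finset.range l, α i with hN
  have hNpos : 0 < N := Finset.prod_pos fun i _ => by have := hα i; omega
  set c := (b : ℕ) - (a : ℕ) with hc
  have hc1 : 0 < c := by omega
  refine ⟨N * c, Nat.le_mul_of_pos_right N hc1, ?_⟩
  intro B hB hBμ
  have hiter : (odometer α)^[N * c] = (odoAt α l)^[c] := by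
    rw [Function.iterate_mul, odometer_iterate_prod]
  have hpoint : ∀ x : ∀ i, Fin (α i), x l = a → (odometer α)^[N * c] x = T l a b x := by
    intro x hx
    have hxv : (x l : ℕ) = (a : ℕ) := congrArg Fin.val hx
    rw [hiter]
    have hlt : (x l : ℕ) + c < α l := by have := b.isLt; omega
    rw [odoAt_iterate_of_lt hlt]
    funext i
    rcases eq_or_ne i l with rfl | hi
    · have hT : T i a b x i = b := by rw [T_apply_eq, hx, Equiv.swap_apply_left]
      rw [Function.update_self, hT]
      exact Fin.ext (by simp only [Fin.val_mk]; omega)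
    · rw [Function.update_of_ne hi, T_apply_ne _ _ _ _ hi]
  -- the measure-theoretic part
  have hCa : MeasurableSet {x : ∀ i, Fin (α i) | x l = a} := measurableSet_coord α l a
  set S := B ∩ {x : ∀ i, Fin (α i) | x l = a} with hS
  have hSmeas : MeasurableSet S := hB.inter hCa
  have hkey := key_measure_eq w μ hw_sum hμ l a b S hSmeas Set.inter_subset_right
  haveI : IsProbabilityMeasure μ := ⟨measure_univ_eq_one α w μ hμ⟩
  have hwa1 : ((w l a : ℝ)) ≤ 1 := by
    have h1 : w l a ≤ 1 := by
      rw [← hw_sum l]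
      exact Finset.single_le_sum (fun j _ => zero_le) (Finset.mem_univ a)
    exact_mod_cast h1
  have hε1 : ε ≤ 1 := by
    have hmin : min ((w l a : ℝ)) ((w l b : ℝ)) ≤ 1 := le_trans (min_le_left _ _) hwa1
    linarith
  set δ := ENNReal.ofReal ε with hδ
  have hBc : μ Bᶜ ≤ δ := by
    rw [prob_compl_eq_one_sub hB]
    have h2 : (1 : ℝ≥0∞) - μ B ≤ 1 - ENNReal.ofReal (1 - ε) := tsub_le_tsub_left hBμ.le 1
    refine h2.trans ?_
    rw [show (1 : ℝ≥0∞) = ENNReal.ofReal 1 from ENNReal.ofReal_one.symm,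
      ← ENNReal.ofReal_sub _ (by linarith : (0:ℝ) ≤ 1 - ε)]
    apply le_of_eq
    norm_num
    rfl
  have hCaμ : μ {x : ∀ i, Fin (α i) | x l = a} = (w l a : ℝ≥0∞) :=
    measure_coord α w hw_sum μ hμ l a
  have h1 : (w l a : ℝ≥0∞) ≤ μ S + δ := by
    have hsub : {x : ∀ i, Fin (α i) | x l = a} ⊆ S ∪ Bᶜ := by
      intro x hx
      by_cases hxB : x ∈ B
      · exact Or.inl ⟨hxB, hx⟩
      · exact Or.inr hxB
    calc (w l a : ℝ≥0∞) = μ {x : ∀ i, Fin (α i) | x l = a} := hCaμ.symm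
      _ ≤ μ (S ∪ Bᶜ) := measure_mono hsub
      _ ≤ μ S + μ Bᶜ := measure_union_le _ _
      _ ≤ μ S + δ := add_le_add_right hBc _
  suffices hTS : (T l a b ⁻¹' S ∩ B).Nonempty by
    obtain ⟨x, hxT, hxB⟩ := hTS
    obtain ⟨hyB, hyCa⟩ := (hxT : T l a b x ∈ S)
    refine ⟨x, ⟨T l a b x, hyB, ?_⟩, hxB⟩
    rw [hpoint _ hyCa, T_invol]
  by_contra hcon
  rw [Set.not_nonempty_iff_eq_empty] at hcon
  have hTSsub : T l a b ⁻¹' S ⊆ Bᶜ := by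
    intro x hx hxB
    have : x ∈ T l a b ⁻¹' S ∩ B := ⟨hx, hxB⟩
    rw [hcon] at this
    exact this
  have h2 : μ (T l a b ⁻¹' S) ≤ δ := (measure_mono hTSsub).trans hBc
  have h16 : ∀ d : Fin (α l), ε < (1/16) * (w l d : ℝ) →
      16 * δ ≤ ((w l d : ℝ≥0) : ℝ≥0∞) := by
    intro d hd
    have h16ε : (16 : ℝ) * ε ≤ ((w l d : ℝ)) := by linarith
    calc (16 : ℝ≥0∞) * δ = ENNReal.ofReal (16 * ε) := by
          rw [ENNReal.ofReal_mul (by norm_num : (0:ℝ) ≤ 16)]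
          norm_num
          rfl
      _ ≤ ENNReal.ofReal ((w l d : ℝ)) := ENNReal.ofReal_le_ofReal h16ε
      _ = ((w l d : ℝ≥0) : ℝ≥0∞) := ENNReal.ofReal_coe_nnreal
  have h16a : 16 * δ ≤ ((w l a : ℝ≥0) : ℝ≥0∞) := h16 a (by
    have := min_le_left ((w l a : ℝ)) ((w l b : ℝ)); nlinarith [min_le_left ((w l a : ℝ)) ((w l b : ℝ))])
  have h16b : 16 * δ ≤ ((w l b : ℝ≥0) : ℝ≥0∞) := h16 b (by
    nlinarith [min_le_right ((w l a : ℝ)) ((w l b : ℝ))])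
  have h3 : (w l b : ℝ≥0∞) * (w l a : ℝ≥0∞) ≤ (w l a : ℝ≥0∞) * δ + (w l b : ℝ≥0∞) * δ := by
    calc (w l b : ℝ≥0∞) * (w l a : ℝ≥0∞) ≤ (w l b : ℝ≥0∞) * (μ S + δ) := mul_le_mul_right h1 _
      _ = (w l b : ℝ≥0∞) * μ S + (w l b : ℝ≥0∞) * δ := mul_add _ _ _
      _ = (w l a : ℝ≥0∞) * μ (T l a b ⁻¹' S) + (w l b : ℝ≥0∞) * δ := by rw [hkey]
      _ ≤ (w l a : ℝ≥0∞) * δ + (w l b : ℝ≥0∞) * δ :=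
          add_le_add_left (mul_le_mul_right h2 _) _
  have h4 : 16 * ((w l b : ℝ≥0∞) * (w l a : ℝ≥0∞)) ≤ 2 * ((w l b : ℝ≥0∞) * (w l a : ℝ≥0∞)) := by
    calc 16 * ((w l b : ℝ≥0∞) * (w l a : ℝ≥0∞))
        ≤ 16 * ((w l a : ℝ≥0∞) * δ + (w l b : ℝ≥0∞) * δ) := mul_le_mul_right h3 _
      _ = (w l a : ℝ≥0∞) * (16 * δ) + (w l b : ℝ≥0∞) * (16 * δ) := by ring
      _ ≤ (w l a : ℝ≥0∞) * (w l b : ℝ≥0∞) + (w l b : ℝ≥0∞) * (w l a : ℝ≥0∞) :=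
          add_le_add (mul_le_mul_right h16b _) (mul_le_mul_right h16a _)
      _ = 2 * ((w l b : ℝ≥0∞) * (w l a : ℝ≥0∞)) := by ring
  have hκ0 : (w l b : ℝ≥0∞) * (w l a : ℝ≥0∞) ≠ 0 :=
    mul_ne_zero (ENNReal.coe_ne_zero.mpr (hw_pos l b).ne') (ENNReal.coe_ne_zero.mpr (hw_pos l a).ne')
  have hκtop : (w l b : ℝ≥0∞) * (w l a : ℝ≥0∞) ≠ ⊤ :=
    ENNReal.mul_ne_top ENNReal.coe_ne_top ENNReal.coe_ne_top
  have : (16 : ℝ≥0∞) ≤ 2 := (ENNReal.mul_le_mul_iff_left hκ0 hκtop).mp h4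
  norm_num at this

/-- If `a ≠ b` in `A_l` and `0 < ε < (1/16)·min{μ_l(a), μ_l(b)}`, then there is
`m ≥ ∏_{i<l} α_i` such that `f^m(B) ∩ B ≠ ∅` for every Borel `B` with `μ(B) > 1 - ε`. -/
theorem exists_iterate_image_inter_nonempty_of_two_points
    (α : ℕ → ℕ) (hα : ∀ i, 2 ≤ α i)
    (w : ∀ i, Fin (α i) → NNReal)
    (hw_pos : ∀ i j, 0 < w i j) (hw_sum : ∀ i, ∑ j, w i j = 1)
    (μ : Measure (∀ i, Fin (α i))) (hμ : IsProductMeasure α w μ)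
    (l : ℕ) (a b : Fin (α l)) (hab : a ≠ b)
    (ε : ℝ) (hε : 0 < ε) (hε' : ε < (1 / 16) * min ((w l a : ℝ)) ((w l b : ℝ))) :
    ∃ m : ℕ, (∏ i ∈ Finset.range l, α i) ≤ m ∧
      ∀ B : Set (∀ i, Fin (α i)), MeasurableSet B → ENNReal.ofReal (1 - ε) < μ B →
        ((odometer α)^[m] '' B ∩ B).Nonempty := by
  have hne : (a : ℕ) ≠ (b : ℕ) := fun h => hab (Fin.ext h)
  rcases hne.lt_or_gt with h | h
  · exact main_aux α hα w hw_pos hw_sum μ hμ l a b h ε hε hε'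
  · exact main_aux α hα w hw_pos hw_sum μ hμ l b a h ε hε (by rwa [min_comm] at hε')
end
end

section
/- Suppose {α_i} and {μ_i} are such that Condition (*) holds (so that T_f is a bounded linear operator). If the composition operator T_f : L^p(μ) → L^p(μ) is topologically transitive, then for every ε > 0 there exist an open set U ⊆ 𝒜 with μ(U) < ε and a positive integer k such that μ(f^k(U)) > 1 − ε. -/
open MeasureTheory Filter Set Topology ENNReal NNReal

noncomputable section

/-- The "-1" map, a right inverse for the odometer. -/
def opred (α : ℕ → ℕ) (y : ∀ i, Fin (α i)) : ∀ i, Fin (α i) :=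
  fun i =>
    if ∀ j < i, ((y j : ℕ) = 0)
    then ⟨((y i : ℕ) + (α i - 1)) % α i, Nat.mod_lt _ (y i).pos⟩
    else y i

lemma odometer_opred (α : ℕ → ℕ) (y : ∀ i, Fin (α i)) :
    odometer α (opred α y) = y := by
  classical
  set x := opred α y with hxdef
  have hcond : ∀ i, (∀ j < i, ((x j : ℕ) + 1 = α j)) ↔ (∀ j < i, ((y j : ℕ) = 0)) := by
    intro i
    constructor
    · intro h j
      induction j using Nat.strong_induction_on with
      | _ j ih =>
        intro hj
        have hy : ∀ j' < j, ((y j' : ℕ) = 0) := fun j' hj' => ih j' hj' (hj'.trans hj)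
        have hxj : (x j : ℕ) = ((y j : ℕ) + (α j - 1)) % α j := by
          rw [hxdef]; unfold opred; rw [if_pos hy]
        have hj2 := h j hj
        rw [hxj] at hj2
        by_contra hne
        have h1 : 1 ≤ (y j : ℕ) := Nat.one_le_iff_ne_zero.2 hne
        have hlt := (y j).isLt
        have heq : ((y j : ℕ) + (α j - 1)) % α j = (y j : ℕ) - 1 := by
          have h2 : (y j : ℕ) + (α j - 1) = ((y j : ℕ) - 1) + α j := by omega
          rw [h2, Nat.add_mod_right, Nat.mod_eq_of_lt (by omega)]
        omega
    · intro h j hj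
      have hy : ∀ j' < j, ((y j' : ℕ) = 0) := fun j' hj' => h j' (hj'.trans hj)
      have hxj : (x j : ℕ) = ((y j : ℕ) + (α j - 1)) % α j := by
        rw [hxdef]; unfold opred; rw [if_pos hy]
      have h0 : (y j : ℕ) = 0 := h j hj
      have hpos : 0 < α j := (y j).pos
      rw [hxj, h0, Nat.zero_add, Nat.mod_eq_of_lt (by omega)]
      omega
  funext i
  apply Fin.ext
  by_cases hc : ∀ j < i, ((x j : ℕ) + 1 = α j)
  · have hy := (hcond i).1 hc
    have hxi : (x i : ℕ) = ((y i : ℕ) + (α i - 1)) % α i := by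
      rw [hxdef]; unfold opred; rw [if_pos hy]
    have hpos : 0 < α i := (y i).pos
    show (odometer α x i : ℕ) = (y i : ℕ)
    unfold odometer
    rw [if_pos hc]
    show ((x i : ℕ) + 1) % α i = (y i : ℕ)
    rw [hxi, Nat.mod_add_mod]
    have h2 : (y i : ℕ) + (α i - 1) + 1 = (y i : ℕ) + α i := by omega
    rw [h2, Nat.add_mod_right, Nat.mod_eq_of_lt (y i).isLt]
  · have hy : ¬ ∀ j < i, ((y j : ℕ) = 0) := fun h => hc ((hcond i).2 h)
    show (odometer α x i : ℕ) = (y i : ℕ)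
    unfold odometer
    rw [if_neg hc, hxdef]
    unfold opred
    rw [if_neg hy]

lemma odometer_surj (α : ℕ → ℕ) : Function.Surjective (odometer α) :=
  fun y => ⟨opred α y, odometer_opred α y⟩

lemma CondStar.null {X : Type*} [MeasurableSpace X] {μ : Measure X} {g : X → X}
    (h : CondStar μ g) {N : Set X} (hN : μ N = 0) : μ (g ⁻¹' N) = 0 := by
  obtain ⟨c, hc, hle⟩ := h
  have h1 : μ (toMeasurable μ N) = 0 := by rw [measure_toMeasurable]; exact hN
  have h2 := hle _ (measurableSet_toMeasurable μ N)
  rw [h1] at h2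
  have h3 : ENNReal.ofReal c * μ (g ⁻¹' toMeasurable μ N) = 0 :=
    le_antisymm h2 zero_le
  rcases mul_eq_zero.1 h3 with h4 | h4
  · exact absurd h4 (by simp only [ENNReal.ofReal_eq_zero, not_le]; linarith)
  · exact measure_mono_null (Set.preimage_mono (subset_toMeasurable μ N)) h4

lemma CondStar.comp_ae {X : Type*} [MeasurableSpace X] {μ : Measure X} {g : X → X}
    (h : CondStar μ g) {f₁ f₂ : X → ℝ} (hf : f₁ =ᵐ[μ] f₂) :
    f₁ ∘ g =ᵐ[μ] f₂ ∘ g := by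
  simp only [Filter.EventuallyEq, ae_iff] at hf ⊢
  exact measure_mono_null (fun x hx => hx) (h.null hf)

/-- If the composition operator `T_f` on `L^p(μ)` is topologically transitive, then for
every `ε > 0` there are an open set `U` with `μ(U) < ε` and `k ≥ 1` with
`μ(f^k(U)) > 1 - ε`. -/
theorem exists_open_small_with_large_image_of_transitive
    (α : ℕ → ℕ) (hα : ∀ i, 2 ≤ α i)
    (w : ∀ i, Fin (α i) → NNReal)
    (hw_pos : ∀ i j, 0 < w i j) (hw_sum : ∀ i, ∑ j, w i j = 1)
    (μ : Measure (∀ i, Fin (α i))) (hμ : IsProductMeasure α w μ)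
    (hstar : CondStar μ (odometer α))
    (p : ENNReal) [Fact (1 ≤ p)] (hp' : p ≠ ⊤)
    (T : Lp ℝ p μ →L[ℝ] Lp ℝ p μ)
    (hT : ∀ φ : Lp ℝ p μ, ⇑(T φ) =ᵐ[μ] (⇑φ ∘ odometer α))
    (htrans : TopTransitive ⇑T) :
    ∀ ε : ℝ, 0 < ε → ∃ U : Set (∀ i, Fin (α i)), IsOpen U ∧ μ U < ENNReal.ofReal ε ∧
      ∃ k : ℕ, 1 ≤ k ∧ ENNReal.ofReal (1 - ε) < μ ((odometer α)^[k] '' U) := by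
  intro ε hε
  classical
  have hprob : μ Set.univ = 1 := by
    have h0 := hμ 0 (fun i => i.elim0)
    simpa using h0
  have hfin : IsFiniteMeasure μ := ⟨by rw [hprob]; exact ENNReal.one_lt_top⟩
  have hp1 : (1 : ENNReal) ≤ p := Fact.out
  have hp0 : p ≠ 0 := (lt_of_lt_of_le zero_lt_one hp1).ne'
  set t := p.toReal with htdef
  have ht : 0 < t := ENNReal.toReal_pos hp0 hp'
  set ε' : ℝ := min ε (1/2) with hε'def
  have hε'pos : 0 < ε' := lt_min hε (by norm_num)
  have hε'le : ε' ≤ ε := min_le_left _ _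
  have hε'half : ε' ≤ 1/2 := min_le_right _ _
  set δ : ℝ := ((ε'/2) ^ t⁻¹) / 2 with hδdef
  have hδ : 0 < δ := by
    have : (0:ℝ) < (ε'/2) ^ t⁻¹ := Real.rpow_pos_of_pos (by linarith) _
    rw [hδdef]; linarith
  have h2δ : (2*δ) = (ε'/2) ^ t⁻¹ := by rw [hδdef]; ring
  set c1 : Lp ℝ p μ := (memLp_const (1:ℝ)).toLp (fun _ => (1:ℝ)) with hc1def
  obtain ⟨k, hk1, hne⟩ := htrans (Metric.ball c1 δ) (Metric.ball 0 δ)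
    Metric.isOpen_ball Metric.isOpen_ball
    (Metric.nonempty_ball.2 hδ) (Metric.nonempty_ball.2 hδ)
  obtain ⟨ψ, ⟨φ, hφU, hfeq⟩, hψV⟩ := hne
  have hφe : eLpNorm (⇑φ - fun _ => (1:ℝ)) p μ < ENNReal.ofReal δ := by
    have hdist : dist φ c1 < δ := Metric.mem_ball.1 hφU
    rw [dist_eq_norm, Lp.norm_def] at hdist
    have hcongr : eLpNorm (⇑φ - fun _ => (1:ℝ)) p μ = eLpNorm (⇑(φ - c1)) p μ := by
      apply eLpNorm_congr_ae
      have hc1ae : ⇑c1 =ᵐ[μ] fun _ => (1:ℝ) := MemLp.coeFn_toLp _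
      filter_upwards [Lp.coeFn_sub φ c1, hc1ae] with x h1 h2
      simp only [h1, h2, Pi.sub_apply]
    rw [hcongr]
    exact (ENNReal.lt_ofReal_iff_toReal_lt (Lp.eLpNorm_ne_top _)).2 hdist
  have hψe : eLpNorm (⇑((⇑T)^[k] φ)) p μ < ENNReal.ofReal δ := by
    rw [hfeq]
    have hdist : dist ψ 0 < δ := Metric.mem_ball.1 hψV
    rw [dist_zero_right, Lp.norm_def] at hdist
    exact (ENNReal.lt_ofReal_iff_toReal_lt (Lp.eLpNorm_ne_top _)).2 hdist
  have cheb : ∀ f : (∀ i, Fin (α i)) → ℝ, AEStronglyMeasurable f μ →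
      eLpNorm f p μ < ENNReal.ofReal δ →
      μ {x | (2:ℝ≥0∞)⁻¹ ≤ (‖f x‖₊ : ℝ≥0∞)} ≤ ENNReal.ofReal (ε'/2) := by
    intro f hf hsn
    have h1 := meas_ge_le_mul_pow_eLpNorm_enorm μ hp0 hp' hf
      (ε := (2:ℝ≥0∞)⁻¹) (by norm_num) (by simp)
    calc μ {x | (2:ℝ≥0∞)⁻¹ ≤ (‖f x‖₊ : ℝ≥0∞)}
        ≤ ((2:ℝ≥0∞)⁻¹)⁻¹ ^ t * eLpNorm f p μ ^ t := h1
      _ ≤ (2:ℝ≥0∞) ^ t * (ENNReal.ofReal δ) ^ t := by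
          rw [inv_inv]
          gcongr
      _ = ENNReal.ofReal ((2*δ) ^ t) := by
          rw [← ENNReal.mul_rpow_of_nonneg _ _ ht.le,
              ← ENNReal.ofReal_ofNat 2, ← ENNReal.ofReal_mul (by norm_num : (0:ℝ) ≤ 2),
              ENNReal.ofReal_rpow_of_pos (by linarith)]
      _ = ENNReal.ofReal (ε'/2) := by
          rw [h2δ, ← Real.rpow_mul (by positivity), inv_mul_cancel₀ ht.ne', Real.rpow_one]
  have hthr : ∀ v : ℝ, ((2:ℝ≥0∞)⁻¹ ≤ (‖v‖₊ : ℝ≥0∞)) ↔ ((2:ℝ)⁻¹ ≤ ‖v‖) := by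
    intro v
    rw [← ENNReal.ofReal_coe_nnreal, coe_nnnorm, ← ENNReal.ofReal_ofNat 2,
        ← ENNReal.ofReal_inv_of_pos (by norm_num : (0:ℝ) < 2),
        ENNReal.ofReal_le_ofReal_iff (norm_nonneg v)]
  set A : Set (∀ i, Fin (α i)) := {x | (2:ℝ≥0∞)⁻¹ ≤ (‖(⇑φ) x‖₊ : ℝ≥0∞)} with hAdef
  have hAc : μ Aᶜ ≤ ENNReal.ofReal (ε'/2) := by
    have hsub : Aᶜ ⊆ {x | (2:ℝ≥0∞)⁻¹ ≤ (‖((⇑φ - fun _ => (1:ℝ)) : (∀ i, Fin (α i)) → ℝ) x‖₊ : ℝ≥0∞)} := by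
      intro x hx
      simp only [hAdef, Set.mem_compl_iff, Set.mem_setOf_eq, not_le] at hx
      simp only [Set.mem_setOf_eq]
      rw [hthr]
      have hx' : ‖(⇑φ) x‖ < (2:ℝ)⁻¹ := by
        by_contra hcon
        exact absurd ((hthr _).2 (not_lt.1 hcon)) (not_le.2 hx)
      have h5 : ‖(1:ℝ)‖ - ‖(⇑φ) x‖ ≤ ‖(1:ℝ) - (⇑φ) x‖ := norm_sub_norm_le _ _
      rw [norm_sub_rev] at h5
      simp only [norm_one] at h5
      have h6 : (2:ℝ)⁻¹ ≤ ‖(⇑φ) x - 1‖ := by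
        have : ((2:ℝ)⁻¹ : ℝ) = 1/2 := by norm_num
        linarith
      simpa using h6
    exact le_trans (measure_mono hsub)
      (cheb _ ((Lp.aestronglyMeasurable φ).sub aestronglyMeasurable_const) hφe)
  have hA : ENNReal.ofReal (1 - ε') < μ A := by
    have h1 : (1:ℝ≥0∞) ≤ μ A + μ Aᶜ := by
      calc (1:ℝ≥0∞) = μ (A ∪ Aᶜ) := by rw [Set.union_compl_self, hprob]
        _ ≤ μ A + μ Aᶜ := measure_union_le _ _
    have h2 : (1:ℝ≥0∞) - ENNReal.ofReal (ε'/2) ≤ μ A := by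
      refine tsub_le_iff_right.2 ?_
      exact le_trans h1 (add_le_add_right hAc _)
    have h3 : (1:ℝ≥0∞) - ENNReal.ofReal (ε'/2) = ENNReal.ofReal (1 - ε'/2) := by
      rw [← ENNReal.ofReal_one]
      exact (ENNReal.ofReal_sub _ (by linarith)).symm
    refine lt_of_lt_of_le ?_ h2
    rw [h3]
    exact (ENNReal.ofReal_lt_ofReal_iff (by linarith)).2 (by linarith)
  set g := odometer α with hgdef
  have hiter : ∀ (m : ℕ) (φ₀ : Lp ℝ p μ), ⇑((⇑T)^[m] φ₀) =ᵐ[μ] ⇑φ₀ ∘ g^[m] := by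
    intro m
    induction m with
    | zero => intro φ₀; simp
    | succ m ih =>
      intro φ₀
      rw [Function.iterate_succ_apply']
      have hchain : ⇑(T ((⇑T)^[m] φ₀)) =ᵐ[μ] (⇑φ₀ ∘ g^[m]) ∘ g :=
        (hT _).trans (hstar.comp_ae (ih φ₀))
      rwa [Function.comp_assoc, ← Function.iterate_succ] at hchain
  set S : Set (∀ i, Fin (α i)) := (g^[k]) ⁻¹' A with hSdef
  have hScong : μ S = μ {x | (2:ℝ≥0∞)⁻¹ ≤ (‖(⇑((⇑T)^[k] φ)) x‖₊ : ℝ≥0∞)} := by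
    apply measure_congr
    filter_upwards [hiter k φ] with x hx
    show ((2:ℝ≥0∞)⁻¹ ≤ (‖(⇑φ) (g^[k] x)‖₊ : ℝ≥0∞))
        = ((2:ℝ≥0∞)⁻¹ ≤ (‖(⇑((⇑T)^[k] φ)) x‖₊ : ℝ≥0∞))
    rw [show (⇑((⇑T)^[k] φ)) x = (⇑φ) (g^[k] x) from hx]
  have hSsmall : μ S < ENNReal.ofReal ε := by
    rw [hScong]
    calc μ {x | (2:ℝ≥0∞)⁻¹ ≤ (‖(⇑((⇑T)^[k] φ)) x‖₊ : ℝ≥0∞)}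
        ≤ ENNReal.ofReal (ε'/2) := cheb _ (Lp.aestronglyMeasurable _) hψe
      _ < ENNReal.ofReal ε := (ENNReal.ofReal_lt_ofReal_iff hε).2 (by linarith)
  obtain ⟨U, hUS, hUopen, hUsmall⟩ := S.exists_isOpen_lt_of_lt _ hSsmall
  refine ⟨U, hUopen, hUsmall, k, hk1, ?_⟩
  have himg : A ⊆ g^[k] '' U := by
    rw [← Function.Surjective.image_preimage ((odometer_surj α).iterate k) A]
    exact Set.image_mono hUS
  calc ENNReal.ofReal (1 - ε) ≤ ENNReal.ofReal (1 - ε') :=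
        ENNReal.ofReal_le_ofReal (by linarith)
    _ < μ A := hA
    _ ≤ μ (g^[k] '' U) := measure_mono himg
end
end

section
/- Suppose there is M > 0 with ρ_n ≤ M for all n ∈ ℕ. Then for every open set U ⊆ 𝒜 and every integer k ≥ 1 one has μ(f^k(U)) ≤ M·μ(U). -/
open MeasureTheory Filter Set Topology ENNReal NNReal

noncomputable section

/-- The inverse odometer (the "-1" map). -/
def odoInv (α : ℕ → ℕ) (x : ∀ i, Fin (α i)) : ∀ i, Fin (α i) :=
  fun i =>
    if ∀ j < i, ((x j : ℕ) = 0)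
    then ⟨((x i : ℕ) + (α i - 1)) % α i, Nat.mod_lt _ (x i).pos⟩
    else x i

variable {α : ℕ → ℕ}

lemma carry_odo (x : ∀ i, Fin (α i)) (i : ℕ) :
    (∀ j < i, ((odometer α x j : ℕ) = 0)) ↔ ∀ j < i, ((x j : ℕ) + 1 = α j) := by
  constructor
  · intro h
    have key : ∀ j, j < i → (x j : ℕ) + 1 = α j := by
      intro j
      induction j using Nat.strong_induction_on with
      | _ j IH =>
        intro hj
        have hcond : ∀ l < j, ((x l : ℕ) + 1 = α l) := fun l hl => IH l hl (hl.trans hj)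
        have h0 := h j hj
        simp only [odometer, if_pos hcond] at h0
        have hdvd : α j ∣ (x j : ℕ) + 1 := Nat.dvd_of_mod_eq_zero h0
        have h1 : α j ≤ (x j : ℕ) + 1 := Nat.le_of_dvd (Nat.succ_pos _) hdvd
        have h2 : (x j : ℕ) < α j := (x j).isLt
        omega
    exact key
  · intro h j hj
    have hcond : ∀ l < j, ((x l : ℕ) + 1 = α l) := fun l hl => h l (hl.trans hj)
    simp only [odometer, if_pos hcond]
    rw [h j hj, Nat.mod_self]

lemma carry_inv (x : ∀ i, Fin (α i)) (i : ℕ) :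
    (∀ j < i, ((odoInv α x j : ℕ) + 1 = α j)) ↔ ∀ j < i, ((x j : ℕ) = 0) := by
  constructor
  · intro h
    have key : ∀ j, j < i → (x j : ℕ) = 0 := by
      intro j
      induction j using Nat.strong_induction_on with
      | _ j IH =>
        intro hj
        have hcond : ∀ l < j, ((x l : ℕ) = 0) := fun l hl => IH l hl (hl.trans hj)
        have h0 := h j hj
        simp only [odoInv, if_pos hcond] at h0
        have hp : 0 < α j := (x j).pos
        have hlt : (x j : ℕ) < α j := (x j).isLt
        have e1 : ((x j : ℕ) + (α j - 1)) % α j + 1 = α j := h0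
        have e2 : (((x j : ℕ) + (α j - 1)) % α j + 1) % α j = ((x j : ℕ) + (α j - 1) + 1) % α j :=
          Nat.mod_add_mod _ _ _
        have e3 : (x j : ℕ) + (α j - 1) + 1 = (x j : ℕ) + α j := by omega
        have e4 : ((x j : ℕ) + α j) % α j = (x j : ℕ) := by
          rw [Nat.add_mod_right]; exact Nat.mod_eq_of_lt hlt
        rw [e1, e3, e4, Nat.mod_self] at e2
        omega
    exact key
  · intro h j hj
    have hcond : ∀ l < j, ((x l : ℕ) = 0) := fun l hl => h l (hl.trans hj)
    simp only [odoInv, if_pos hcond]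
    have hp : 0 < α j := (x j).pos
    rw [h j hj]
    rw [Nat.zero_add, Nat.mod_eq_of_lt (by omega)]
    omega

lemma odoInv_odometer (x : ∀ i, Fin (α i)) : odoInv α (odometer α x) = x := by
  funext i
  by_cases hD : ∀ j < i, ((x j : ℕ) + 1 = α j)
  · have hC : ∀ j < i, ((odometer α x j : ℕ) = 0) := (carry_odo x i).2 hD
    have hp : 0 < α i := (x i).pos
    have hlt : (x i : ℕ) < α i := (x i).isLt
    have hval : (odometer α x i : ℕ) = ((x i : ℕ) + 1) % α i := by
      simp only [odometer]; rw [if_pos hD]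
    simp only [odoInv]
    rw [if_pos hC]
    apply Fin.ext
    show ((odometer α x i : ℕ) + (α i - 1)) % α i = (x i : ℕ)
    rw [hval, Nat.mod_add_mod]
    have e : (x i : ℕ) + 1 + (α i - 1) = (x i : ℕ) + α i := by omega
    rw [e, Nat.add_mod_right]
    exact Nat.mod_eq_of_lt hlt
  · have hC : ¬ ∀ j < i, ((odometer α x j : ℕ) = 0) := fun h => hD ((carry_odo x i).1 h)
    simp only [odoInv]
    rw [if_neg hC]
    simp only [odometer]
    rw [if_neg hD]

lemma odometer_odoInv (x : ∀ i, Fin (α i)) : odometer α (odoInv α x) = x := by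
  funext i
  by_cases hE : ∀ j < i, ((x j : ℕ) = 0)
  · have hC : ∀ j < i, ((odoInv α x j : ℕ) + 1 = α j) := (carry_inv x i).2 hE
    have hp : 0 < α i := (x i).pos
    have hlt : (x i : ℕ) < α i := (x i).isLt
    have hval : (odoInv α x i : ℕ) = ((x i : ℕ) + (α i - 1)) % α i := by
      simp only [odoInv]; rw [if_pos hE]
    simp only [odometer]
    rw [if_pos hC]
    apply Fin.ext
    show ((odoInv α x i : ℕ) + 1) % α i = (x i : ℕ)
    rw [hval, Nat.mod_add_mod]
    have e : (x i : ℕ) + (α i - 1) + 1 = (x i : ℕ) + α i := by omega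
    rw [e, Nat.add_mod_right]
    exact Nat.mod_eq_of_lt hlt
  · have hC : ¬ ∀ j < i, ((odoInv α x j : ℕ) + 1 = α j) := fun h => hE ((carry_inv x i).1 h)
    simp only [odometer]
    rw [if_neg hC]
    simp only [odoInv]
    rw [if_neg hE]

lemma odometer_local (x y : ∀ i, Fin (α i)) (n : ℕ) (h : ∀ j < n, x j = y j) :
    ∀ i < n, odometer α x i = odometer α y i := by
  intro i hi
  have hiff : (∀ j < i, ((x j : ℕ) + 1 = α j)) ↔ (∀ j < i, ((y j : ℕ) + 1 = α j)) := by
    constructor <;> intro h' j hj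
    · rw [← h j (hj.trans hi)]; exact h' j hj
    · rw [h j (hj.trans hi)]; exact h' j hj
  have hxy := h i hi
  simp only [odometer]
  by_cases hc : ∀ j < i, ((x j : ℕ) + 1 = α j)
  · rw [if_pos hc, if_pos (hiff.1 hc)]
    exact Fin.ext (by show ((x i : ℕ) + 1) % α i = ((y i : ℕ) + 1) % α i; rw [hxy])
  · rw [if_neg hc, if_neg (fun hcy => hc (hiff.2 hcy))]
    exact hxy

lemma odoInv_local (x y : ∀ i, Fin (α i)) (n : ℕ) (h : ∀ j < n, x j = y j) :
    ∀ i < n, odoInv α x i = odoInv α y i := by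
  intro i hi
  have hiff : (∀ j < i, ((x j : ℕ) = 0)) ↔ (∀ j < i, ((y j : ℕ) = 0)) := by
    constructor <;> intro h' j hj
    · rw [← h j (hj.trans hi)]; exact h' j hj
    · rw [h j (hj.trans hi)]; exact h' j hj
  have hxy := h i hi
  simp only [odoInv]
  by_cases hc : ∀ j < i, ((x j : ℕ) = 0)
  · rw [if_pos hc, if_pos (hiff.1 hc)]
    exact Fin.ext (by show ((x i : ℕ) + (α i - 1)) % α i = ((y i : ℕ) + (α i - 1)) % α i; rw [hxy])
  · rw [if_neg hc, if_neg (fun hcy => hc (hiff.2 hcy))]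
    exact hxy

/-- Basic cylinder. -/
def cyl (α : ℕ → ℕ) (n : ℕ) (a : ∀ i : Fin n, Fin (α i.1)) : Set (∀ i, Fin (α i)) :=
  {x | ∀ i : Fin n, x i.1 = a i}

lemma measurable_cyl (n : ℕ) (a : ∀ i : Fin n, Fin (α i.1)) :
    MeasurableSet (cyl α n a) := by
  have : cyl α n a = ⋂ i : Fin n, (fun x : ∀ i, Fin (α i) => x i.1) ⁻¹' {a i} := by
    ext x; simp [cyl]
  rw [this]
  exact MeasurableSet.iInter fun i => (measurable_pi_apply _) (measurableSet_singleton _)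

lemma cyl_disjoint {n : ℕ} {a b : ∀ i : Fin n, Fin (α i.1)} (h : a ≠ b) :
    Disjoint (cyl α n a) (cyl α n b) := by
  rw [Set.disjoint_left]
  intro x hxa hxb
  exact h (funext fun i => (hxa i).symm.trans (hxb i))

lemma image_cyl (hpos : ∀ i, 0 < α i) (n : ℕ) (a : ∀ i : Fin n, Fin (α i.1)) :
    ∃ b, odometer α '' cyl α n a = cyl α n b := by
  set x₀ : ∀ i, Fin (α i) := fun i => if h : i < n then a ⟨i, h⟩ else ⟨0, hpos i⟩ with hx₀
  have hx₀a : ∀ j (hj : j < n), x₀ j = a ⟨j, hj⟩ := fun j hj => by simp [hx₀, dif_pos hj]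
  refine ⟨fun i => odometer α x₀ i.1, ?_⟩
  ext y
  constructor
  · rintro ⟨x, hx, rfl⟩ i
    exact odometer_local x x₀ n (fun j hj => (hx ⟨j, hj⟩).trans (hx₀a j hj).symm) i.1 i.2
  · intro hy
    refine ⟨odoInv α y, fun i => ?_, odometer_odoInv y⟩
    have h1 : ∀ j < n, y j = odometer α x₀ j := fun j hj => hy ⟨j, hj⟩
    have h2 := odoInv_local y (odometer α x₀) n h1 i.1 i.2
    rw [h2, odoInv_odometer]
    exact hx₀a i.1 i.2

lemma image_iter_cyl (hpos : ∀ i, 0 < α i) (k n : ℕ) (a : ∀ i : Fin n, Fin (α i.1)) :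
    ∃ b, (odometer α)^[k] '' cyl α n a = cyl α n b := by
  induction k with
  | zero => exact ⟨a, by simp⟩
  | succ k IH =>
    obtain ⟨b, hb⟩ := IH
    obtain ⟨c, hc⟩ := image_cyl hpos n b
    exact ⟨c, by rw [Function.iterate_succ', Set.image_comp, hb, hc]⟩

lemma cyl_bound_s16 (hα : ∀ i, 2 ≤ α i) (w : ∀ i, Fin (α i) → NNReal)
    (hw_pos : ∀ i j, 0 < w i j)
    (μ : Measure (∀ i, Fin (α i))) (hμ : IsProductMeasure α w μ)
    (M : ℝ)
    (hρ : ∀ n : ℕ, ∏ i ∈ Finset.range (n + 1),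
      (((⨆ j, w i j : NNReal) : ℝ) / ((⨅ j, w i j : NNReal) : ℝ)) ≤ M)
    (n : ℕ) (a b : ∀ i : Fin n, Fin (α i.1)) :
    μ (cyl α n b) ≤ ENNReal.ofReal M * μ (cyl α n a) := by
  have hne : ∀ i, Nonempty (Fin (α i)) := fun i => ⟨⟨0, by have := hα i; omega⟩⟩
  set rat : ℕ → NNReal := fun m => (⨆ j, w m j) / (⨅ j, w m j) with hrat
  have hinf_pos : ∀ m, 0 < ⨅ j, w m j := by
    intro m
    obtain ⟨j0, hj0⟩ := Finite.exists_min (w m)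
    exact lt_of_lt_of_le (hw_pos m j0) (le_ciInf hj0)
  have hfac : ∀ (m : ℕ) (p q : Fin (α m)), w m p ≤ rat m * w m q := by
    intro m p q
    have h1 : w m p ≤ ⨆ j, w m j := le_ciSup (Set.Finite.bddAbove (Set.finite_range _)) p
    have h2 : (⨅ j, w m j) ≤ w m q := ciInf_le (OrderBot.bddBelow _) q
    calc w m p ≤ ⨆ j, w m j := h1
      _ = rat m * (⨅ j, w m j) := (div_mul_cancel₀ _ (hinf_pos m).ne').symm
      _ ≤ rat m * w m q := mul_le_mul_right h2 _
  have hrat1 : ∀ m, (1 : ℝ) ≤ (rat m : ℝ) := by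
    intro m
    have hle : (⨅ j, w m j) ≤ ⨆ j, w m j :=
      le_trans (ciInf_le (OrderBot.bddBelow _) (Classical.arbitrary _))
        (le_ciSup (Set.Finite.bddAbove (Set.finite_range _)) (Classical.arbitrary _))
    rw [hrat]
    simp only [NNReal.coe_div]
    rw [one_le_div (by exact_mod_cast hinf_pos m)]
    exact_mod_cast hle
  have hcoe : ((∏ i : Fin n, rat i.1 : NNReal) : ℝ)
      = ∏ i ∈ Finset.range n, (((⨆ j, w i j : NNReal) : ℝ) / ((⨅ j, w i j : NNReal) : ℝ)) := by
    rw [NNReal.coe_prod]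
    rw [Fin.prod_univ_eq_prod_range (fun i => ((rat i : NNReal) : ℝ)) n]
    exact Finset.prod_congr rfl fun i _ => by rw [hrat]; simp [NNReal.coe_div]
  have hRM : ((∏ i : Fin n, rat i.1 : NNReal) : ℝ) ≤ M := by
    rw [hcoe]
    cases n with
    | zero =>
      simp only [Finset.range_zero, Finset.prod_empty]
      have h0 := hρ 0
      have h1 := hrat1 0
      rw [hrat] at h1
      simp only [NNReal.coe_div] at h1
      simp only [zero_add, Finset.prod_range_one] at h0
      linarith
    | succ m => exact hρ m
  have keyNN : (∏ i : Fin n, w i.1 (b i)) ≤ (∏ i : Fin n, rat i.1) * ∏ i : Fin n, w i.1 (a i) := by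
    rw [← Finset.prod_mul_distrib]
    exact Finset.prod_le_prod' fun i _ => hfac i.1 (b i) (a i)
  have hma := hμ n a
  have hmb := hμ n b
  show μ {x | ∀ i : Fin n, x i.1 = b i} ≤ ENNReal.ofReal M * μ {x | ∀ i : Fin n, x i.1 = a i}
  rw [hma, hmb, ← ENNReal.coe_finset_prod, ← ENNReal.coe_finset_prod]
  calc ((∏ i : Fin n, w i.1 (b i) : NNReal) : ENNReal)
      ≤ ((((∏ i : Fin n, rat i.1) * ∏ i : Fin n, w i.1 (a i)) : NNReal) : ENNReal) :=
        ENNReal.coe_le_coe.2 keyNN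
    _ = ((∏ i : Fin n, rat i.1 : NNReal) : ENNReal) * ((∏ i : Fin n, w i.1 (a i) : NNReal) : ENNReal) :=
        ENNReal.coe_mul ..
    _ ≤ ENNReal.ofReal M * ((∏ i : Fin n, w i.1 (a i) : NNReal) : ENNReal) := by
        refine mul_le_mul_left ?_ _
        rw [← ENNReal.ofReal_coe_nnreal]
        exact ENNReal.ofReal_le_ofReal hRM

/-- If `ρ_n = ∏_{i=0}^n η_i/δ_i ≤ M` for all `n`, then `μ(f^k(U)) ≤ M·μ(U)` for every
open set `U` and every `k ≥ 1`. -/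
theorem measure_image_le_of_rho_bounded
    (α : ℕ → ℕ) (hα : ∀ i, 2 ≤ α i)
    (w : ∀ i, Fin (α i) → NNReal)
    (hw_pos : ∀ i j, 0 < w i j) (hw_sum : ∀ i, ∑ j, w i j = 1)
    (μ : Measure (∀ i, Fin (α i))) (hμ : IsProductMeasure α w μ)
    (M : ℝ) (hM : 0 < M)
    (hρ : ∀ n : ℕ, ∏ i ∈ Finset.range (n + 1),
      (((⨆ j, w i j : NNReal) : ℝ) / ((⨅ j, w i j : NNReal) : ℝ)) ≤ M) :
    ∀ U : Set (∀ i, Fin (α i)), IsOpen U → ∀ k : ℕ, 1 ≤ k →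
      μ ((odometer α)^[k] '' U) ≤ ENNReal.ofReal M * μ U := by
  classical
  intro U hU k _
  have hpos : ∀ i, 0 < α i := fun i => lt_of_lt_of_le two_pos (hα i)
  set T : ∀ n : ℕ, Set (∀ i : Fin n, Fin (α i.1)) := fun n => {a | cyl α n a ⊆ U} with hT
  set Un : ℕ → Set (∀ i, Fin (α i)) := fun n => ⋃ a ∈ T n, cyl α n a with hUn
  have hself : ∀ (n : ℕ) (x : ∀ i, Fin (α i)), x ∈ cyl α n (fun i => x i.1) := fun n x i => rfl
  have hUU : U = ⋃ n, Un n := by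
    apply Set.Subset.antisymm
    · intro x hx
      obtain ⟨I, u, hIu, hsub⟩ := isOpen_pi_iff.1 hU x hx
      have hmem : (fun i : Fin (I.sup id + 1) => x i.1) ∈ T (I.sup id + 1) := by
        intro y hy
        apply hsub
        refine Set.mem_pi.2 fun i hi => ?_
        have hlt : i < I.sup id + 1 := Nat.lt_succ_of_le (Finset.le_sup (f := id) hi)
        have hyi : y i = x i := hy ⟨i, hlt⟩
        rw [hyi]
        exact (hIu i hi).2
      exact Set.mem_iUnion.2 ⟨I.sup id + 1, Set.mem_biUnion hmem (hself _ x)⟩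
    · exact Set.iUnion_subset fun n => Set.iUnion₂_subset fun a ha => ha
  have hmonoU : Monotone Un := by
    intro m n hmn x hx
    obtain ⟨a, ha, hxa⟩ := Set.mem_iUnion₂.1 hx
    have hmem : (fun i : Fin n => x i.1) ∈ T n := by
      intro y hy
      apply ha
      intro i
      exact (hy ⟨i.1, lt_of_lt_of_le i.2 hmn⟩).trans (hxa i)
    exact Set.mem_biUnion hmem (hself n x)
  have key : ∀ n, μ ((odometer α)^[k] '' Un n) ≤ ENNReal.ofReal M * μ (Un n) := by
    intro n
    have hcount : (T n).Countable := Set.to_countable _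
    choose b hb using image_iter_cyl hpos k n
    have h1 : (odometer α)^[k] '' Un n = ⋃ a ∈ T n, (odometer α)^[k] '' cyl α n a := by
      simp only [hUn]
      exact Set.image_iUnion₂ _ _
    calc μ ((odometer α)^[k] '' Un n)
        = μ (⋃ a ∈ T n, (odometer α)^[k] '' cyl α n a) := by rw [h1]
      _ ≤ ∑' a : T n, μ ((odometer α)^[k] '' cyl α n a.1) := measure_biUnion_le μ hcount _
      _ ≤ ∑' a : T n, ENNReal.ofReal M * μ (cyl α n a.1) := by
            refine ENNReal.tsum_le_tsum fun a => ?_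
            rw [hb a.1]
            exact cyl_bound_s16 hα w hw_pos μ hμ M hρ n a.1 (b a.1)
      _ = ENNReal.ofReal M * ∑' a : T n, μ (cyl α n a.1) := ENNReal.tsum_mul_left
      _ = ENNReal.ofReal M * μ (Un n) := by
            simp only [hUn]
            rw [measure_biUnion hcount (fun p _ q _ hpq => cyl_disjoint hpq)
              (fun p _ => measurable_cyl n p)]
  have hmono2 : Monotone fun n => (odometer α)^[k] '' Un n :=
    fun m n h => Set.image_mono (hmonoU h)
  calc μ ((odometer α)^[k] '' U)
      = μ (⋃ n, (odometer α)^[k] '' Un n) := by rw [hUU, Set.image_iUnion]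
    _ = ⨆ n, μ ((odometer α)^[k] '' Un n) := Directed.measure_iUnion hmono2.directed_le
    _ ≤ ⨆ n, ENNReal.ofReal M * μ (Un n) := iSup_mono key
    _ = ENNReal.ofReal M * ⨆ n, μ (Un n) := (ENNReal.mul_iSup _ _).symm
    _ = ENNReal.ofReal M * μ U := by
        rw [← Directed.measure_iUnion hmonoU.directed_le, ← hUU]
end
end
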